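/- arXiv:1401.6271 — 4 statements merged into one kernel-verified Lean document; each statement's English description precedes it below -/
import Mathlib

section
/- For all n ≥ 0, E_n^{(k)}(x; a, b, c) = (ln a + ln b)^n · E_n^{(k)}((x ln c + ln a)/(ln a + ln b)), where E_n^{(k)}(y) denotes the poly-Euler polynomial with a=1, b=c=e. -/
set_option maxRecDepth 4000

open FormalMultilinearSeries in
lemma coeff_zero_of_hasSum_zero (c : ℕ → ℝ) (r : ℝ) (hr : 0 < r)
    (h : ∀ t : ℝ, |t| < r → HasSum (fun n => c n * t ^ n) 0) : ∀ n, c n = 0 := by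
  set p := ofScalars ℝ c with hp
  have hnorm : ∀ n, ‖p n‖ = |c n| := by
    intro n
    rw [hp, ofScalars_norm, Real.norm_eq_abs]
  set t0 : ℝ := r / 2 with ht0
  have ht0pos : 0 < t0 := by positivity
  have ht0lt : |t0| < r := by rw [abs_of_pos ht0pos]; linarith
  have hsum := (h t0 ht0lt).summable
  have htend : Filter.Tendsto (fun n => |c n * t0 ^ n|) Filter.atTop (nhds 0) := by
    simpa using hsum.tendsto_atTop_zero.abs
  obtain ⟨C, hC⟩ := htend.bddAbove_range
  have hrad : (t0.toNNReal : ENNReal) ≤ p.radius := by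
    apply p.le_radius_of_bound C
    intro n
    have := hC (Set.mem_range_self n)
    rw [hnorm]
    calc |c n| * (t0.toNNReal : ℝ) ^ n = |c n * t0 ^ n| := by
          rw [Real.coe_toNNReal _ ht0pos.le, abs_mul, abs_pow, abs_of_pos ht0pos]
      _ ≤ C := this
  have hball : HasFPowerSeriesOnBall (fun _ : ℝ => (0 : ℝ)) p 0 t0.toNNReal := by
    refine ⟨hrad, by simpa using ht0pos, ?_⟩
    intro y hy
    rw [EMetric.mem_ball, edist_zero_right] at hy
    have hy' : |y| < r := by
      have h1 : ‖y‖₊ < t0.toNNReal := by exact_mod_cast hy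
      have h2 : (‖y‖₊ : ℝ) < t0 := lt_of_lt_of_le (by exact_mod_cast h1)
        (by simp [Real.coe_toNNReal _ ht0pos.le])
      have : |y| = (‖y‖₊ : ℝ) := by simp [Real.norm_eq_abs]
      rw [this]; linarith
    have heq : (fun m => p m fun _ => y) = fun m => c m * y ^ m := by
      funext m
      rw [hp, ofScalars_apply_eq, smul_eq_mul]
    rw [heq]
    exact h y hy'
  have hzero : p = 0 := (hball.hasFPowerSeriesAt).eq_zero
  intro n
  have : ofScalars ℝ c n = 0 := by rw [← hp, hzero]; rfl
  rwa [FormalMultilinearSeries.ofScalars_eq_zero] at this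

/-- The polylogarithm `Li_k(z) = ∑_{m ≥ 1} z^m / m^k`. -/
noncomputable def polyLog (k : ℤ) (z : ℝ) : ℝ :=
  ∑' m : ℕ, z ^ (m + 1) / ((m : ℝ) + 1) ^ k

/-- Theorem 2: `E_n^{(k)}(x;a,b,c) = (ln a + ln b)^n E_n^{(k)}((x ln c + ln a)/(ln a + ln b))`. -/
theorem generalized_polyEuler_reduction
    (a b c : ℝ) (ha : 0 < a) (hb : 0 < b) (hab : a * b ≠ 1) (hc : 0 < c) (k : ℤ)
    (E : ℕ → ℝ → ℝ) (Eo : ℕ → ℝ → ℝ) (ε : ℝ) (hε : 0 < ε)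
    (hE : ∀ x t : ℝ, |t| < ε →
      HasSum (fun n : ℕ => E n x * t ^ n / (n.factorial : ℝ))
        (2 * polyLog k (1 - (a * b) ^ (-t)) / (a ^ (-t) + b ^ t) * c ^ (x * t)))
    (hEo : ∀ x t : ℝ, |t| < ε →
      HasSum (fun n : ℕ => Eo n x * t ^ n / (n.factorial : ℝ))
        (2 * polyLog k (1 - Real.exp (-t)) * Real.exp (x * t) / (1 + Real.exp t)))
    (n : ℕ) (x : ℝ) :
    E n x = (Real.log a + Real.log b) ^ n *
      Eo n ((x * Real.log c + Real.log a) / (Real.log a + Real.log b)) := by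
  set la := Real.log a
  set lb := Real.log b
  set lc := Real.log c
  set L := la + lb with hL
  have hab0 : (0 : ℝ) < a * b := mul_pos ha hb
  have hLlog : L = Real.log (a * b) := (Real.log_mul ha.ne' hb.ne').symm
  have hLne : L ≠ 0 := by
    rw [hLlog]
    exact Real.log_ne_zero_of_pos_of_ne_one hab0 hab
  have hLabs : 0 < |L| := abs_pos.mpr hLne
  set y := (x * lc + la) / L with hy
  have hyL : y * L = x * lc + la := div_mul_cancel₀ _ hLne
  set ε' := min ε (ε / |L|) with hε'
  have hε'pos : 0 < ε' := lt_min hε (div_pos hε hLabs)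
  -- key: for |t| < ε', both generating functions agree
  have key : ∀ t : ℝ, |t| < ε' →
      HasSum (fun m : ℕ => ((E m x - L ^ m * Eo m y) / (m.factorial : ℝ)) * t ^ m) 0 := by
    intro t ht
    have ht1 : |t| < ε := lt_of_lt_of_le ht (min_le_left _ _)
    have ht2 : |L * t| < ε := by
      rw [abs_mul]
      calc |L| * |t| < |L| * (ε / |L|) := by
            apply mul_lt_mul_of_pos_left (lt_of_lt_of_le ht (min_le_right _ _)) hLabs
        _ = ε := by field_simp
    have h1 := hE x t ht1
    have h2 := hEo y (L * t) ht2
    -- rewrite h2's terms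
    have h2' : HasSum (fun m : ℕ => (L ^ m * Eo m y) * t ^ m / (m.factorial : ℝ))
        (2 * polyLog k (1 - Real.exp (-(L * t))) * Real.exp (y * (L * t)) /
          (1 + Real.exp (L * t))) := by
      have : (fun m : ℕ => Eo m y * (L * t) ^ m / (m.factorial : ℝ))
          = fun m : ℕ => (L ^ m * Eo m y) * t ^ m / (m.factorial : ℝ) := by
        funext m; rw [mul_pow]; ring
      rwa [this] at h2
    -- the two sums are equal
    have hvals : 2 * polyLog k (1 - (a * b) ^ (-t)) / (a ^ (-t) + b ^ t) * c ^ (x * t)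
        = 2 * polyLog k (1 - Real.exp (-(L * t))) * Real.exp (y * (L * t)) /
          (1 + Real.exp (L * t)) := by
      set u := Real.exp (la * t) with hu
      set v := Real.exp (lb * t) with hv
      set w := Real.exp (lc * (x * t)) with hw
      have hupos : 0 < u := Real.exp_pos _
      have hvpos : 0 < v := Real.exp_pos _
      have hwpos : 0 < w := Real.exp_pos _
      have e1 : (a * b : ℝ) ^ (-t) = Real.exp (-(L * t)) := by
        rw [Real.rpow_def_of_pos hab0, ← hLlog]; ring_nf
      have e2 : (a : ℝ) ^ (-t) = u⁻¹ := by
        rw [Real.rpow_def_of_pos ha, hu, ← Real.exp_neg]; ring_nf; rw [mul_comm]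
      have e3 : (b : ℝ) ^ t = v := by
        rw [Real.rpow_def_of_pos hb]
      have e4 : (c : ℝ) ^ (x * t) = w := by
        rw [Real.rpow_def_of_pos hc]
      have e5 : Real.exp (y * (L * t)) = w * u := by
        rw [← mul_assoc, hyL, hw, hu, ← Real.exp_add]
        congr 1; ring
      have e6 : Real.exp (L * t) = u * v := by
        rw [hL, add_mul, Real.exp_add]
      rw [e1, e2, e3, e4, e5, e6]
      have d1 : u⁻¹ + v ≠ 0 := by positivity
      have d2 : (1 : ℝ) + u * v ≠ 0 := by positivity
      field_simp
    rw [hvals] at h1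
    have h3 := h1.sub h2'
    rw [sub_self] at h3
    have : (fun m : ℕ => (L ^ m * Eo m y) * t ^ m / (m.factorial : ℝ)) =
        fun m : ℕ => (L ^ m * Eo m y) * t ^ m / (m.factorial : ℝ) := rfl
    have hfe : (fun m : ℕ => E m x * t ^ m / (m.factorial : ℝ)
          - (L ^ m * Eo m y) * t ^ m / (m.factorial : ℝ))
        = fun m : ℕ => ((E m x - L ^ m * Eo m y) / (m.factorial : ℝ)) * t ^ m := by
      funext m; ring
    rwa [hfe] at h3
  have hzero := coeff_zero_of_hasSum_zero _ ε' hε'pos key n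
  have hfac : ((n.factorial : ℝ)) ≠ 0 := Nat.cast_ne_zero.mpr n.factorial_ne_zero
  have := (div_eq_zero_iff.mp hzero).resolve_right hfac
  linarith [this]
end

section
/- For all n ≥ 0, the derivative with respect to x satisfies d/dx E_{n+1}^{(k)}(x; a, b, c) = (n+1)(ln c) · E_n^{(k)}(x; a, b, c). -/
open Filter Topology

set_option maxHeartbeats 1000000


/-- If `∑ u m * s ^ m` converges and `|t| < s`, then `∑ u m * t ^ m` converges absolutely. -/
lemma aux_summable_abs {u : ℕ → ℝ} {s t : ℝ}
    (hsum : Summable fun m => u m * s ^ m) (hts : |t| < s) :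
    Summable fun m => |u m * t ^ m| := by
  have hs : 0 < s := lt_of_le_of_lt (abs_nonneg t) hts
  have htend : Tendsto (fun m => |u m * s ^ m|) atTop (nhds 0) := by
    simpa using hsum.tendsto_atTop_zero.abs
  obtain ⟨C, hC⟩ := htend.bddAbove_range
  have hCmem : ∀ m, |u m * s ^ m| ≤ C := fun m => hC (Set.mem_range_self m)
  have hq : |t| / s < 1 := (div_lt_one hs).2 hts
  have hq0 : 0 ≤ |t| / s := div_nonneg (abs_nonneg t) hs.le
  refine Summable.of_nonneg_of_le (fun m => abs_nonneg _) (fun m => ?_)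
    ((summable_geometric_of_lt_one hq0 hq).mul_left C)
  have : |u m * t ^ m| = |u m * s ^ m| * (|t| / s) ^ m := by
    rw [abs_mul, abs_mul, abs_pow, abs_pow, abs_of_pos hs, div_pow, mul_assoc,
      mul_comm (s ^ m), div_mul_cancel₀ _ (pow_ne_zero m hs.ne')]
  rw [this]
  exact mul_le_mul_of_nonneg_right (hCmem m) (pow_nonneg hq0 m)

/-- Uniqueness of power series coefficients: if `∑ u m * t ^ m = 0` for all `|t| < ε`,
then all coefficients vanish. -/
lemma aux_unique {u : ℕ → ℝ} {ε : ℝ} (hε : 0 < ε)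
    (h : ∀ t : ℝ, |t| < ε → HasSum (fun m => u m * t ^ m) 0) : ∀ m, u m = 0 := by
  intro m
  induction m using Nat.strong_induction_on with
  | _ n ih =>
  -- shift the series by n using the inductive hypothesis
  have h1 : ∀ t : ℝ, |t| < ε → HasSum (fun m => u (m + n) * t ^ m * t ^ n) 0 := by
    intro t ht
    have hsum0 : ∑ i ∈ Finset.range n, u i * t ^ i = 0 :=
      Finset.sum_eq_zero fun i hi => by rw [ih i (Finset.mem_range.mp hi), zero_mul]
    have h0 : HasSum (fun m => u m * t ^ m) (0 + ∑ i ∈ Finset.range n, u i * t ^ i) := by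
      rw [hsum0, add_zero]; exact h t ht
    have := (hasSum_nat_add_iff n).2 h0
    refine this.congr_fun fun m => ?_
    rw [pow_add, mul_assoc]
  have h2 : ∀ t : ℝ, |t| < ε → t ≠ 0 → HasSum (fun m => u (m + n) * t ^ m) 0 := by
    intro t ht ht0
    have := (h1 t ht).div_const (t ^ n)
    rw [zero_div] at this
    refine this.congr_fun fun m => ?_
    rw [mul_div_assoc, div_self (pow_ne_zero n ht0), mul_one]
  set s : ℝ := ε / 2 with hs_def
  have hs : 0 < s := by positivity
  have hsε : |s| < ε := by rw [abs_of_pos hs]; linarith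
  have hS : Summable fun m => u (m + n) * s ^ m := (h2 s hsε hs.ne').summable
  -- shifted once more, in the form needed for `aux_summable_abs`
  have hS1 : Summable fun m => (u (m + 1 + n) * s) * s ^ m := by
    have := ((summable_nat_add_iff 1).2 hS)
    refine this.congr fun m => ?_
    simp only [pow_succ]
    ring
  have hK : Summable fun m => |(u (m + 1 + n) * s) * (s / 2) ^ m| := by
    refine aux_summable_abs hS1 ?_
    rw [abs_of_pos (by positivity : (0:ℝ) < s / 2)]
    linarith
  set K : ℝ := ∑' m, |(u (m + 1 + n) * s) * (s / 2) ^ m| with hK_def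
  have hK0 : 0 ≤ K := tsum_nonneg fun m => abs_nonneg _
  -- the key estimate
  have hmain : ∀ t : ℝ, 0 < |t| → |t| ≤ s / 2 → |u n| ≤ |t| / s * K := by
    intro t ht0 hts
    have htε : |t| < ε := by
      calc |t| ≤ s / 2 := hts
        _ < ε := by rw [hs_def]; linarith
    have h3 : HasSum (fun m => u (m + 1 + n) * t ^ (m + 1)) (0 - u n * t ^ 0) := by
      have h2' := h2 t htε (by intro he; rw [he, abs_zero] at ht0; exact lt_irrefl 0 ht0)
      have h0 : HasSum (fun m => u (m + n) * t ^ m)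
          ((0 - u n * t ^ 0) + ∑ i ∈ Finset.range 1, u (i + n) * t ^ i) := by
        simpa using h2'
      have := (hasSum_nat_add_iff (f := fun m => u (m + n) * t ^ m) 1).2 h0
      exact this.congr_fun fun m => by rw [add_right_comm]
    have hbound : ∀ m : ℕ, |u (m + 1 + n) * t ^ (m + 1)| ≤
        |t| / s * |(u (m + 1 + n) * s) * (s / 2) ^ m| := by
      intro m
      have h1 : |u (m + 1 + n) * t ^ (m + 1)| = |u (m + 1 + n)| * |t| * |t| ^ m := by
        rw [abs_mul, abs_pow, pow_succ]; ring
      have h2 : |t| / s * |(u (m + 1 + n) * s) * (s / 2) ^ m|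
          = |u (m + 1 + n)| * |t| * (s / 2) ^ m := by
        rw [abs_mul, abs_mul, abs_pow, abs_of_pos hs,
          abs_of_pos (by positivity : (0:ℝ) < s/2)]
        field_simp
      rw [h1, h2]
      have := pow_le_pow_left₀ (abs_nonneg t) hts m
      have h3 : |t| ^ m ≤ (s / 2) ^ m := this
      have h4 : 0 ≤ |u (m + 1 + n)| * |t| := mul_nonneg (abs_nonneg _) (abs_nonneg _)
      exact mul_le_mul_of_nonneg_left h3 h4
    have hsumabs : Summable fun m => |u (m + 1 + n) * t ^ (m + 1)| := by
      refine Summable.of_nonneg_of_le (fun m => abs_nonneg _) hbound ?_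
      exact hK.mul_left _
    have : |u n| = |(0 : ℝ) - u n * t ^ 0| := by simp
    rw [this, ← h3.tsum_eq]
    calc |∑' m, u (m + 1 + n) * t ^ (m + 1)|
        ≤ ∑' m, |u (m + 1 + n) * t ^ (m + 1)| := by
          have := norm_tsum_le_tsum_norm (f := fun m => u (m + 1 + n) * t ^ (m + 1))
            (by simpa only [Real.norm_eq_abs] using hsumabs)
          simpa only [Real.norm_eq_abs] using this
      _ ≤ ∑' m, |t| / s * |(u (m + 1 + n) * s) * (s / 2) ^ m| :=
          Summable.tsum_le_tsum hbound hsumabs (hK.mul_left _)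
      _ = |t| / s * K := tsum_mul_left
  -- take t → 0
  have hseq : ∀ j : ℕ, |u n| ≤ (s / 2 / (j + 1)) / s * K := by
    intro j
    have hj : (0:ℝ) < s / 2 / (j + 1) := by positivity
    have h1 : (1:ℝ) ≤ (j:ℝ) + 1 := by
      exact_mod_cast Nat.one_le_iff_ne_zero.2 (Nat.succ_ne_zero j)
    have hle : s / 2 / ((j:ℝ) + 1) ≤ s / 2 := by
      calc s / 2 / ((j:ℝ) + 1) ≤ s / 2 / 1 :=
            div_le_div_of_nonneg_left (by positivity) one_pos h1
        _ = s / 2 := by rw [div_one]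
    have h := hmain (s / 2 / (j + 1)) (by rw [abs_of_pos hj]; exact hj)
      (by rw [abs_of_pos hj]; exact hle)
    rwa [abs_of_pos hj] at h
  have htend : Tendsto (fun j : ℕ => (s / 2 / (j + 1)) / s * K) atTop (nhds 0) := by
    have : Tendsto (fun j : ℕ => (j:ℝ) + 1) atTop atTop :=
      tendsto_natCast_atTop_atTop.atTop_add tendsto_const_nhds
    have h1 : Tendsto (fun j : ℕ => s / 2 / ((j:ℝ) + 1)) atTop (nhds 0) :=
      Tendsto.div_atTop tendsto_const_nhds this
    have h2 : Tendsto (fun j : ℕ => (s / 2 / ((j:ℝ) + 1)) / s * K) atTop (nhds (0 / s * K)) :=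
      (h1.div_const s).mul_const K
    simpa using h2
  have : |u n| ≤ 0 := le_of_tendsto_of_tendsto tendsto_const_nhds htend
    (Filter.Eventually.of_forall hseq)
  exact abs_nonpos_iff.mp this

/-- Key identity extracted from the generating function. -/
lemma aux_key
    (a b c : ℝ) (hc : 0 < c) (k : ℤ)
    (E : ℕ → ℝ → ℝ) (ε : ℝ) (hε : 0 < ε)
    (hE : ∀ x t : ℝ, |t| < ε →
      HasSum (fun n : ℕ => E n x * t ^ n / (n.factorial : ℝ))
        (2 * polyLog k (1 - (a * b) ^ (-t)) / (a ^ (-t) + b ^ t) * c ^ (x * t)))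
    (x h : ℝ) (N : ℕ) :
    E N (x + h) / (N.factorial : ℝ) =
      ∑ p ∈ Finset.HasAntidiagonal.antidiagonal N,
        (E p.1 x / (p.1.factorial : ℝ)) * ((h * Real.log c) ^ p.2 / (p.2.factorial : ℝ)) := by
  set u : ℕ → ℝ := fun N => E N (x + h) / (N.factorial : ℝ) -
      ∑ p ∈ Finset.HasAntidiagonal.antidiagonal N,
        (E p.1 x / (p.1.factorial : ℝ)) * ((h * Real.log c) ^ p.2 / (p.2.factorial : ℝ)) with hu
  suffices hz : ∀ N, u N = 0 by
    have := hz N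
    rw [hu] at this
    exact sub_eq_zero.mp this
  refine aux_unique hε ?_
  intro t ht
  set G : ℝ := 2 * polyLog k (1 - (a * b) ^ (-t)) / (a ^ (-t) + b ^ t) with hG
  set A : ℕ → ℝ := fun m => E m x * t ^ m / (m.factorial : ℝ) with hA_def
  set B : ℕ → ℝ := fun j => (h * Real.log c * t) ^ j / (j.factorial : ℝ) with hB_def
  have hA : HasSum A (G * c ^ (x * t)) := hE x t ht
  have hB : HasSum B (Real.exp (h * Real.log c * t)) := by
    rw [Real.exp_eq_exp_ℝ]
    exact NormedSpace.expSeries_div_hasSum_exp (h * Real.log c * t)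
  -- absolute summability
  have hAabs : Summable fun m => ‖A m‖ := by
    set s : ℝ := (|t| + ε) / 2 with hs_def
    have hts : |t| < s := by rw [hs_def]; linarith
    have hs0 : 0 < s := lt_of_le_of_lt (abs_nonneg t) hts
    have hsε : |s| < ε := by rw [abs_of_pos hs0, hs_def]; linarith
    have hsum : Summable fun m => (E m x / (m.factorial : ℝ)) * s ^ m := by
      refine (hE x s hsε).summable.congr fun m => ?_
      rw [mul_div_right_comm]
    have := aux_summable_abs hsum hts
    refine this.congr fun m => ?_
    show |E m x / (m.factorial:ℝ) * t ^ m| = ‖E m x * t ^ m / (m.factorial:ℝ)‖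
    rw [Real.norm_eq_abs, mul_div_right_comm]
  have hBabs : Summable fun j => ‖B j‖ := by
    have := Real.summable_pow_div_factorial |h * Real.log c * t|
    refine this.congr fun j => ?_
    rw [Real.norm_eq_abs, hB_def, abs_div, abs_pow,
      Nat.abs_cast]
  -- Cauchy product
  have hsummC : Summable fun N => ∑ p ∈ Finset.HasAntidiagonal.antidiagonal N, A p.1 * B p.2 :=
    (summable_norm_sum_mul_antidiagonal_of_summable_norm hAabs hBabs).of_norm
  have hC : HasSum (fun N => ∑ p ∈ Finset.HasAntidiagonal.antidiagonal N, A p.1 * B p.2)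
      (G * c ^ (x * t) * Real.exp (h * Real.log c * t)) := by
    have heq := tsum_mul_tsum_eq_tsum_sum_antidiagonal_of_summable_norm hAabs hBabs
    rw [hA.tsum_eq, hB.tsum_eq] at heq
    rw [heq]
    exact hsummC.hasSum
  -- identify the value with the generating function at x + h
  have hval : G * c ^ (x * t) * Real.exp (h * Real.log c * t) = G * c ^ ((x + h) * t) := by
    rw [show (x + h) * t = x * t + h * t by ring, Real.rpow_add hc,
      Real.rpow_def_of_pos hc (h * t), show Real.log c * (h * t) = h * Real.log c * t by ring,
      mul_assoc]
  rw [hval] at hC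
  have hD : HasSum (fun N => E N (x + h) * t ^ N / (N.factorial : ℝ)) (G * c ^ ((x + h) * t)) :=
    hE (x + h) t ht
  have hsub := hD.sub hC
  rw [sub_self] at hsub
  refine hsub.congr_fun fun N => ?_
  rw [hu]
  rw [sub_mul, Finset.sum_mul]
  congr 1
  · rw [mul_div_right_comm]
  · refine Finset.sum_congr rfl fun p hp => ?_
    have hpN : p.1 + p.2 = N := Finset.HasAntidiagonal.mem_antidiagonal.mp hp
    rw [hA_def, hB_def]
    simp only
    rw [← hpN, pow_add, mul_pow]
    ring

/-- Theorem 3: `d/dx E_{n+1}^{(k)}(x;a,b,c) = (n+1)(ln c) E_n^{(k)}(x;a,b,c)`. -/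
theorem generalized_polyEuler_deriv
    (a b c : ℝ) (ha : 0 < a) (hb : 0 < b) (hc : 0 < c) (k : ℤ)
    (E : ℕ → ℝ → ℝ) (ε : ℝ) (hε : 0 < ε)
    (hE : ∀ x t : ℝ, |t| < ε →
      HasSum (fun n : ℕ => E n x * t ^ n / (n.factorial : ℝ))
        (2 * polyLog k (1 - (a * b) ^ (-t)) / (a ^ (-t) + b ^ t) * c ^ (x * t)))
    (n : ℕ) (x : ℝ) :
    HasDerivAt (fun y : ℝ => E (n + 1) y) (((n : ℝ) + 1) * Real.log c * E n x) x := by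
  have hfac : ((n + 1).factorial : ℝ) ≠ 0 := Nat.cast_ne_zero.2 (Nat.factorial_ne_zero _)
  have key : ∀ h : ℝ, E (n + 1) (x + h) =
      (((n + 1).factorial : ℝ)) * ∑ p ∈ Finset.HasAntidiagonal.antidiagonal (n + 1),
        (E p.1 x / (p.1.factorial : ℝ)) * ((Real.log c) ^ p.2 / (p.2.factorial : ℝ)) * h ^ p.2 := by
    intro h
    have hid := aux_key a b c hc k E ε hε hE x h (n + 1)
    have h1 : E (n + 1) (x + h) = (((n + 1).factorial : ℝ)) *
        ∑ p ∈ Finset.HasAntidiagonal.antidiagonal (n + 1),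
          (E p.1 x / (p.1.factorial : ℝ)) * ((h * Real.log c) ^ p.2 / (p.2.factorial : ℝ)) := by
      rw [← hid, mul_div_cancel₀ _ hfac]
    rw [h1]
    congr 1
    refine Finset.sum_congr rfl fun p hp => ?_
    rw [mul_pow]
    ring
  set P : ℝ → ℝ := fun z => (((n + 1).factorial : ℝ)) * ∑ p ∈ Finset.HasAntidiagonal.antidiagonal (n + 1),
      (E p.1 x / (p.1.factorial : ℝ)) * ((Real.log c) ^ p.2 / (p.2.factorial : ℝ)) * z ^ p.2
    with hP
  have hfun : (fun y : ℝ => E (n + 1) y) = fun y => P (y - x) := by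
    funext y
    have := key (y - x)
    rw [show x + (y - x) = y by ring] at this
    exact this
  have hP' : HasDerivAt P (((n : ℝ) + 1) * Real.log c * E n x) 0 := by
    have hsum : HasDerivAt
        (fun z : ℝ => ∑ p ∈ Finset.HasAntidiagonal.antidiagonal (n + 1),
          (E p.1 x / (p.1.factorial : ℝ)) * ((Real.log c) ^ p.2 / (p.2.factorial : ℝ)) * z ^ p.2)
        (∑ p ∈ Finset.HasAntidiagonal.antidiagonal (n + 1),
          (E p.1 x / (p.1.factorial : ℝ)) * ((Real.log c) ^ p.2 / (p.2.factorial : ℝ)) *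
            ((p.2 : ℝ) * 0 ^ (p.2 - 1))) 0 :=
      HasDerivAt.fun_sum fun (p : ℕ × ℕ) _ => (hasDerivAt_pow p.2 (0 : ℝ)).const_mul _
    have hmul := hsum.const_mul (((n + 1).factorial : ℝ))
    have hsum_eq : ∑ p ∈ Finset.HasAntidiagonal.antidiagonal (n + 1),
        (E p.1 x / (p.1.factorial : ℝ)) * ((Real.log c) ^ p.2 / (p.2.factorial : ℝ)) *
          ((p.2 : ℝ) * 0 ^ (p.2 - 1)) = E n x / (n.factorial : ℝ) * Real.log c := by
      rw [Finset.sum_eq_single (n, 1)]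
      · simp
      · rintro ⟨i, j⟩ hp hne
        have hij : i + j = n + 1 := Finset.HasAntidiagonal.mem_antidiagonal.mp hp
        match j with
        | 0 => simp
        | 1 =>
          exfalso
          apply hne
          have : i = n := by omega
          rw [this]
        | (j + 2) => simp [zero_pow]
      · intro hnot
        exact absurd (Finset.HasAntidiagonal.mem_antidiagonal.mpr (by omega)) hnot
    rw [hsum_eq] at hmul
    have hval : (((n + 1).factorial : ℝ)) * (E n x / (n.factorial : ℝ) * Real.log c)
        = ((n : ℝ) + 1) * Real.log c * E n x := by
      have hn : ((n.factorial : ℝ)) ≠ 0 := Nat.cast_ne_zero.2 (Nat.factorial_ne_zero _)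
      rw [Nat.factorial_succ, Nat.cast_mul, Nat.cast_add, Nat.cast_one]
      field_simp
    rw [hval] at hmul
    exact hmul
  have hP0 : HasDerivAt P (((n : ℝ) + 1) * Real.log c * E n x) (x - x) := by
    rw [sub_self]; exact hP'
  have hcomp := HasDerivAt.comp_sub_const x x hP0
  rw [hfun]
  exact hcomp
end

section
/- The symmetrized poly-Euler polynomials D_n^{(m)}(x,y;a,b,c) have the double exponential generating function Σ_{n≥0} Σ_{m≥0} D_n^{(m)}(x,y;a,b,c) (t^n/n!)(u^m/m!) = 2 e^{Yu} e^{Xt} e^{t+u}(1-e^{-t}) / ((e^t+1)(e^t+e^u-e^{t+u})), where X = (x ln c + ln a)/(ln a + ln b) and Y = (y ln c + ln a)/(ln a + ln b). -/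
open Filter FormalMultilinearSeries
open scoped NNReal ENNReal
set_option maxHeartbeats 2000000

/-- The negative-index polylogarithm `Li_{-k}(z) = ∑_{m ≥ 1} m^k z^m`. -/
noncomputable def polyLogNeg (k : ℕ) (z : ℝ) : ℝ :=
  ∑' m : ℕ, ((m : ℝ) + 1) ^ k * z ^ (m + 1)

lemma aux_pow_le (k m : ℕ) :
    ((m : ℝ) + 1) ^ k ≤ (k.factorial : ℝ) * Real.exp 1 ^ (m + 1) := by
  have h := Real.pow_div_factorial_le_exp (x := (m : ℝ) + 1) (by positivity) k
  rw [div_le_iff₀ (by positivity)] at h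
  calc ((m : ℝ) + 1) ^ k ≤ Real.exp ((m : ℝ) + 1) * k.factorial := h
    _ = (k.factorial : ℝ) * Real.exp 1 ^ (m + 1) := by
        rw [← Real.exp_nat_mul]
        push_cast
        ring_nf

/-- complex version of polyLogNeg -/
noncomputable def cPhi (k : ℕ) (w : ℂ) : ℂ := ∑' m : ℕ, ((m : ℂ) + 1) ^ k * w ^ (m + 1)

noncomputable def phiCoef (k : ℕ) : ℕ → ℂ := fun j => if j = 0 then 0 else (j : ℂ) ^ k

lemma phiCoef_norm_le (k j : ℕ) : ‖phiCoef k j‖ ≤ (k.factorial : ℝ) * Real.exp 1 ^ j := by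
  rcases j with _ | m
  · simp only [phiCoef]
    norm_num
  · have : ‖phiCoef k (m + 1)‖ = ((m : ℝ) + 1) ^ k := by
      simp only [phiCoef, if_neg (Nat.succ_ne_zero m), norm_pow]
      rw [Complex.norm_natCast]
      push_cast; ring
    rw [this]
    exact aux_pow_le k m

lemma summable_norm_phiCoef_mul (k : ℕ) {w : ℂ} (hw : ‖w‖ < 1 / 3) :
    Summable (fun j : ℕ => ‖phiCoef k j * w ^ j‖) := by
  have he : Real.exp 1 * ‖w‖ < 1 := by
    nlinarith [Real.exp_one_lt_d9, norm_nonneg w]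
  have hge : Summable (fun j : ℕ => (Real.exp 1 * ‖w‖) ^ j) := by
    apply summable_geometric_of_lt_one (by positivity) he
  have hle : ∀ j : ℕ, ‖phiCoef k j * w ^ j‖ ≤ (k.factorial : ℝ) * (Real.exp 1 * ‖w‖) ^ j := by
    intro j
    rw [norm_mul, norm_pow, mul_pow]
    calc ‖phiCoef k j‖ * ‖w‖ ^ j ≤ ((k.factorial : ℝ) * Real.exp 1 ^ j) * ‖w‖ ^ j :=
          mul_le_mul_of_nonneg_right (phiCoef_norm_le k j) (by positivity)
      _ = (k.factorial : ℝ) * (Real.exp 1 ^ j * ‖w‖ ^ j) := by ring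
  exact Summable.of_nonneg_of_le (fun j => norm_nonneg _) hle (hge.mul_left _)
lemma term_le (k m : ℕ) {q : ℝ} (hq : 0 ≤ q) (h6 : q ≤ 1 / 6) :
    ((m : ℝ) + 1) ^ k * q ^ (m + 1) ≤ (k.factorial : ℝ) * (1 / 2) ^ (m + 1) := by
  calc ((m : ℝ) + 1) ^ k * q ^ (m + 1)
      ≤ ((k.factorial : ℝ) * Real.exp 1 ^ (m + 1)) * (1 / 6) ^ (m + 1) := by
        apply mul_le_mul (aux_pow_le k m) (pow_le_pow_left₀ hq h6 _)
          (by positivity) (by positivity)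
    _ = (k.factorial : ℝ) * (Real.exp 1 / 6) ^ (m + 1) := by rw [div_eq_mul_one_div (Real.exp 1), mul_pow]; ring
    _ ≤ (k.factorial : ℝ) * (1 / 2) ^ (m + 1) := by
        apply mul_le_mul_of_nonneg_left _ (by positivity)
        apply pow_le_pow_left₀ (by positivity)
        nlinarith [Real.exp_one_lt_d9]

lemma norm_term_le (k m : ℕ) {w : ℂ} (hw : ‖w‖ ≤ 1 / 6) :
    ‖((m : ℂ) + 1) ^ k * w ^ (m + 1)‖ ≤ (k.factorial : ℝ) * (1 / 2) ^ (m + 1) := by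
  rw [norm_mul, norm_pow, norm_pow]
  have h1 : ‖(m : ℂ) + 1‖ = ((m : ℝ) + 1) := by
    rw [show ((m : ℂ) + 1) = ((m + 1 : ℕ) : ℂ) by push_cast; ring, Complex.norm_natCast]
    push_cast; ring
  rw [h1]
  exact term_le k m (norm_nonneg w) hw

lemma summable_half_pow : Summable (fun m : ℕ => ((1 : ℝ) / 2) ^ (m + 1)) :=
  (summable_geometric_of_lt_one (by norm_num) (by norm_num : (1/2:ℝ) < 1)).comp_injective
    (add_left_injective 1)

lemma hasSum_half_pow : HasSum (fun m : ℕ => ((1 : ℝ) / 2) ^ (m + 1)) 1 := by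
  have := (hasSum_geometric_of_lt_one (by norm_num : (0:ℝ) ≤ 1/2)
    (by norm_num : (1/2:ℝ) < 1)).mul_left (1/2 : ℝ)
  norm_num at this
  rw [show (fun m : ℕ => ((1:ℝ)/2)^(m+1)) = fun i => 1/2 * (1/2)^i from funext fun m => by rw [pow_succ]; ring]
  exact this

lemma hasSum_phiCoef (k : ℕ) {w : ℂ} (hw : ‖w‖ < 1 / 3) :
    HasSum (fun j : ℕ => phiCoef k j * w ^ j) (cPhi k w) := by
  have hs : Summable (fun j : ℕ => phiCoef k j * w ^ j) :=
    (summable_norm_phiCoef_mul k hw).of_norm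
  have hsh : Summable (fun m : ℕ => phiCoef k (m + 1) * w ^ (m + 1)) :=
    (summable_nat_add_iff 1).2 hs
  have heq : (fun m : ℕ => phiCoef k (m + 1) * w ^ (m + 1)) =
      fun m : ℕ => ((m : ℂ) + 1) ^ k * w ^ (m + 1) := by
    funext m
    simp only [phiCoef, if_neg (Nat.succ_ne_zero m)]
    push_cast
    ring
  have h1 : HasSum (fun m : ℕ => phiCoef k (m + 1) * w ^ (m + 1)) (cPhi k w) := by
    rw [heq, cPhi]
    exact (heq ▸ hsh).hasSum
  have h0 : phiCoef k 0 = 0 := by simp [phiCoef]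
  apply (hasSum_nat_add_iff' (f := fun j : ℕ => phiCoef k j * w ^ j) 1).1
  simpa [h0] using h1

lemma cPhi_hasFPowerSeriesOnBall (k : ℕ) :
    HasFPowerSeriesOnBall (cPhi k) (FormalMultilinearSeries.ofScalars ℂ (phiCoef k)) 0
      (((1 / 3 : ℝ≥0) : ℝ≥0∞)) := by
  have he3 : Real.exp 1 / 3 ≤ 1 := by nlinarith [Real.exp_one_lt_d9]
  constructor
  · apply FormalMultilinearSeries.le_radius_of_bound _ (k.factorial : ℝ)
    intro n
    rw [FormalMultilinearSeries.ofScalars_norm]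
    have hc : ((1 / 3 : ℝ≥0) : ℝ) = (1 / 3 : ℝ) := by norm_num
    rw [hc]
    calc ‖phiCoef k n‖ * (1 / 3 : ℝ) ^ n
        ≤ ((k.factorial : ℝ) * Real.exp 1 ^ n) * (1 / 3 : ℝ) ^ n :=
          mul_le_mul_of_nonneg_right (phiCoef_norm_le k n) (by positivity)
      _ = (k.factorial : ℝ) * (Real.exp 1 / 3) ^ n := by rw [div_eq_mul_one_div (Real.exp 1), mul_pow]; ring
      _ ≤ (k.factorial : ℝ) * 1 := by
          apply mul_le_mul_of_nonneg_left _ (by positivity)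
          exact pow_le_one₀ (by positivity) he3
      _ = _ := mul_one _
  · norm_num
  · intro y hy
    have hy' : ‖y‖ < 1 / 3 := by
      rw [mem_emetric_ball_zero_iff] at hy
      exact_mod_cast hy
    simp only [FormalMultilinearSeries.ofScalars_apply_eq, zero_add, smul_eq_mul]
    exact hasSum_phiCoef k hy'

lemma cPhi_norm_le (k : ℕ) {w : ℂ} (hw : ‖w‖ ≤ 1 / 6) :
    ‖cPhi k w‖ ≤ (k.factorial : ℝ) := by
  have hsum2 : Summable (fun m : ℕ => (k.factorial : ℝ) * (1 / 2) ^ (m + 1)) :=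
    summable_half_pow.mul_left _
  have hsum1 : Summable (fun m : ℕ => ‖((m : ℂ) + 1) ^ k * w ^ (m + 1)‖) :=
    Summable.of_nonneg_of_le (fun m => norm_nonneg _) (fun m => norm_term_le k m hw) hsum2
  calc ‖cPhi k w‖ ≤ ∑' m : ℕ, ‖((m : ℂ) + 1) ^ k * w ^ (m + 1)‖ := norm_tsum_le_tsum_norm hsum1
    _ ≤ ∑' m : ℕ, (k.factorial : ℝ) * (1 / 2) ^ (m + 1) :=
        Summable.tsum_le_tsum (fun m => norm_term_le k m hw) hsum1 hsum2
    _ = (k.factorial : ℝ) * ∑' m : ℕ, (1 / 2 : ℝ) ^ (m + 1) := tsum_mul_left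
    _ = (k.factorial : ℝ) := by rw [hasSum_half_pow.tsum_eq, mul_one]

lemma summable_polyLogNeg (k : ℕ) {z : ℝ} (hz : |z| ≤ 1 / 6) :
    Summable (fun m : ℕ => ((m : ℝ) + 1) ^ k * z ^ (m + 1)) := by
  apply Summable.of_norm
  apply Summable.of_nonneg_of_le (fun m => norm_nonneg _) _ (summable_half_pow.mul_left
    (k.factorial : ℝ))
  intro m
  rw [Real.norm_eq_abs, abs_mul, abs_pow, abs_pow, abs_of_nonneg (by positivity : (0:ℝ) ≤ (m:ℝ)+1)]
  exact term_le k m (abs_nonneg z) hz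

lemma cPhi_ofReal (k : ℕ) {z : ℝ} (hz : |z| ≤ 1 / 6) :
    cPhi k (z : ℂ) = ((polyLogNeg k z : ℝ) : ℂ) := by
  have h := Complex.ofRealCLM.map_tsum (summable_polyLogNeg k hz)
  simp only [Complex.ofRealCLM_apply] at h
  rw [polyLogNeg, h, cPhi]
  congr 1
  funext m
  push_cast
  ring

lemma polyLogNeg_abs_le (k : ℕ) {z : ℝ} (hz : |z| ≤ 1 / 6) :
    |polyLogNeg k z| ≤ (k.factorial : ℝ) := by
  have := cPhi_norm_le k (w := (z : ℂ)) (by rwa [Complex.norm_real, Real.norm_eq_abs])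
  rwa [cPhi_ofReal k hz, Complex.norm_real, Real.norm_eq_abs] at this
noncomputable def Gfun (lA lB lC x : ℝ) (k : ℕ) (t : ℝ) : ℝ :=
  2 * polyLogNeg k (1 - Real.exp (-((lA + lB) * t))) /
    (Real.exp (-(lA * t)) + Real.exp (lB * t)) * Real.exp (lC * x * t)

noncomputable def cF (lA lB lC x : ℝ) (k : ℕ) (ζ : ℂ) : ℂ :=
  2 * cPhi k (1 - Complex.exp (-(((lA : ℂ) + lB) * ζ))) /
    (Complex.exp (-((lA : ℂ) * ζ)) + Complex.exp ((lB : ℂ) * ζ)) *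
    Complex.exp ((lC : ℂ) * x * ζ)

lemma cexp_sub_one_norm {v : ℂ} (h : ‖v‖ ≤ 1) : ‖Complex.exp v - 1‖ ≤ 2 * ‖v‖ := by
  simpa using
    Complex.norm_exp_sub_one_le (x := v) (by simpa using h)

lemma coeff_bound (lA lB lC x : ℝ) (E : ℕ → ℕ → ℝ) (ε : ℝ) (hε : 0 < ε)
    (hE : ∀ k : ℕ, ∀ t : ℝ, |t| < ε →
      HasSum (fun n : ℕ => E k n * t ^ n / (n.factorial : ℝ)) (Gfun lA lB lC x k t)) :
    ∃ R : ℝ, 0 < R ∧ ∀ k n : ℕ,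
      |E k n| ≤ 6 * (k.factorial : ℝ) * (n.factorial : ℝ) / R ^ n := by
  classical
  set L : ℝ := lA + lB with hLdef
  set K : ℝ := |L| + |lA| + |lB| + |lC * x| + 1 with hKdef
  have hK1 : 1 ≤ K := by
    have := abs_nonneg L; have := abs_nonneg lA; have := abs_nonneg lB
    have := abs_nonneg (lC * x); simp only [hKdef]; linarith
  have hKpos : 0 < K := lt_of_lt_of_le one_pos hK1
  set R : ℝ := 1 / (12 * K) with hRdef
  have hRpos : 0 < R := by positivity
  have hR112 : R ≤ 1 / 12 := by
    rw [hRdef, div_le_div_iff₀ (by positivity) (by norm_num)]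
    linarith
  refine ⟨R, hRpos, fun k => ?_⟩
  -- the basic ball estimates
  have hLR : |L| * R ≤ 1 / 12 := by
    rw [hRdef]
    rw [mul_one_div, div_le_div_iff₀ (by positivity) (by norm_num)]
    have : |L| ≤ K := by
      have := abs_nonneg lA; have := abs_nonneg lB; have := abs_nonneg (lC * x)
      simp only [hKdef]; linarith
    nlinarith
  have hABR : (|lA| + |lB|) * R ≤ 1 / 12 := by
    rw [hRdef, mul_one_div, div_le_div_iff₀ (by positivity) (by norm_num)]
    have : |lA| + |lB| ≤ K := by
      have := abs_nonneg L; have := abs_nonneg (lC * x); simp only [hKdef]; linarith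
    nlinarith
  have hCR : |lC * x| * R ≤ 1 / 12 := by
    rw [hRdef, mul_one_div, div_le_div_iff₀ (by positivity) (by norm_num)]
    have : |lC * x| ≤ K := by
      have := abs_nonneg L; have := abs_nonneg lA; have := abs_nonneg lB
      simp only [hKdef]; linarith
    nlinarith
  -- pointwise estimates on the closed ball
  have hz6 : ∀ ζ : ℂ, ‖ζ‖ ≤ R → ‖1 - Complex.exp (-(((lA : ℂ) + lB) * ζ))‖ ≤ 1 / 6 := by
    intro ζ hζ
    rw [norm_sub_rev]
    have hv : ‖-(((lA : ℂ) + lB) * ζ)‖ = |L| * ‖ζ‖ := by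
      rw [norm_neg, norm_mul]
      congr 1
      rw [show ((lA : ℂ) + lB) = ((L : ℝ) : ℂ) by push_cast [hLdef]; ring]
      rw [Complex.norm_real, Real.norm_eq_abs]
    have hv1 : ‖-(((lA : ℂ) + lB) * ζ)‖ ≤ 1 / 12 := by
      rw [hv]
      calc |L| * ‖ζ‖ ≤ |L| * R := by
            exact mul_le_mul_of_nonneg_left hζ (abs_nonneg L)
        _ ≤ 1 / 12 := hLR
    calc ‖Complex.exp (-(((lA : ℂ) + lB) * ζ)) - 1‖ ≤ 2 * ‖-(((lA : ℂ) + lB) * ζ)‖ :=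
          cexp_sub_one_norm (le_trans hv1 (by norm_num))
      _ ≤ 2 * (1 / 12) := by linarith
      _ = 1 / 6 := by norm_num
  have hden : ∀ ζ : ℂ, ‖ζ‖ ≤ R →
      1 ≤ ‖Complex.exp (-((lA : ℂ) * ζ)) + Complex.exp ((lB : ℂ) * ζ)‖ := by
    intro ζ hζ
    have ha' : ‖Complex.exp (-((lA : ℂ) * ζ)) - 1‖ ≤ 2 * (|lA| * R) := by
      have hn : ‖-((lA : ℂ) * ζ)‖ = |lA| * ‖ζ‖ := by
        rw [norm_neg, norm_mul, Complex.norm_real, Real.norm_eq_abs]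
      have h1 : ‖-((lA : ℂ) * ζ)‖ ≤ |lA| * R := by
        rw [hn]; exact mul_le_mul_of_nonneg_left hζ (abs_nonneg lA)
      have h2 : |lA| * R ≤ 1 := by nlinarith [abs_nonneg lB, hRpos.le]
      calc ‖Complex.exp (-((lA : ℂ) * ζ)) - 1‖ ≤ 2 * ‖-((lA : ℂ) * ζ)‖ :=
            cexp_sub_one_norm (le_trans h1 h2)
        _ ≤ 2 * (|lA| * R) := by linarith
    have hb' : ‖Complex.exp ((lB : ℂ) * ζ) - 1‖ ≤ 2 * (|lB| * R) := by
      have hn : ‖(lB : ℂ) * ζ‖ = |lB| * ‖ζ‖ := by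
        rw [norm_mul, Complex.norm_real, Real.norm_eq_abs]
      have h1 : ‖(lB : ℂ) * ζ‖ ≤ |lB| * R := by
        rw [hn]; exact mul_le_mul_of_nonneg_left hζ (abs_nonneg lB)
      have h2 : |lB| * R ≤ 1 := by nlinarith [abs_nonneg lA, hRpos.le]
      calc ‖Complex.exp ((lB : ℂ) * ζ) - 1‖ ≤ 2 * ‖(lB : ℂ) * ζ‖ :=
            cexp_sub_one_norm (le_trans h1 h2)
        _ ≤ 2 * (|lB| * R) := by linarith
    have key : ‖(2 : ℂ)‖ - ‖(Complex.exp (-((lA : ℂ) * ζ)) - 1) + (Complex.exp ((lB : ℂ) * ζ) - 1)‖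
        ≤ ‖Complex.exp (-((lA : ℂ) * ζ)) + Complex.exp ((lB : ℂ) * ζ)‖ := by
      have heq : Complex.exp (-((lA : ℂ) * ζ)) + Complex.exp ((lB : ℂ) * ζ) =
          2 + ((Complex.exp (-((lA : ℂ) * ζ)) - 1) + (Complex.exp ((lB : ℂ) * ζ) - 1)) := by ring
      rw [heq]
      have := norm_sub_norm_le (2 : ℂ)
        (-((Complex.exp (-((lA : ℂ) * ζ)) - 1) + (Complex.exp ((lB : ℂ) * ζ) - 1)))
      rwa [norm_neg, sub_neg_eq_add] at this
    have h2n : ‖(2 : ℂ)‖ = 2 := by norm_num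
    have hsum : ‖(Complex.exp (-((lA : ℂ) * ζ)) - 1) + (Complex.exp ((lB : ℂ) * ζ) - 1)‖
        ≤ 2 * ((|lA| + |lB|) * R) := by
      calc _ ≤ ‖Complex.exp (-((lA : ℂ) * ζ)) - 1‖ + ‖Complex.exp ((lB : ℂ) * ζ) - 1‖ :=
            norm_add_le _ _
        _ ≤ 2 * (|lA| * R) + 2 * (|lB| * R) := add_le_add ha' hb'
        _ = 2 * ((|lA| + |lB|) * R) := by ring
    have : 2 * ((|lA| + |lB|) * R) ≤ 1 / 6 := by linarith
    linarith [key, hsum, h2n, this]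
  have hexpC : ∀ ζ : ℂ, ‖ζ‖ ≤ R → ‖Complex.exp ((lC : ℂ) * x * ζ)‖ ≤ 3 := by
    intro ζ hζ
    rw [Complex.norm_exp]
    have h1 : ((lC : ℂ) * x * ζ).re ≤ ‖(lC : ℂ) * x * ζ‖ := by
      exact (Complex.re_le_norm _)
    have h2 : ‖(lC : ℂ) * x * ζ‖ = |lC * x| * ‖ζ‖ := by
      rw [show ((lC : ℂ) * x) = ((lC * x : ℝ) : ℂ) by push_cast; ring]
      rw [norm_mul, Complex.norm_real, Real.norm_eq_abs]
    have h3 : ((lC : ℂ) * x * ζ).re ≤ 1 := by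
      rw [h2] at h1
      have : |lC * x| * ‖ζ‖ ≤ |lC * x| * R :=
        mul_le_mul_of_nonneg_left hζ (abs_nonneg _)
      linarith [hCR]
    calc Real.exp ((lC : ℂ) * x * ζ).re ≤ Real.exp 1 := Real.exp_le_exp.2 h3
      _ ≤ 3 := by nlinarith [Real.exp_one_lt_d9]
  -- differentiability of cF on the closed ball
  have hgdiff : Differentiable ℂ (fun ζ : ℂ => 1 - Complex.exp (-(((lA : ℂ) + lB) * ζ))) := by
    apply Differentiable.const_sub
    exact Complex.differentiable_exp.comp (differentiable_id.const_mul _).neg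
  have hPhiDiff : DifferentiableOn ℂ (cPhi k) (Metric.ball (0 : ℂ) ((1 / 3 : ℝ≥0) : ℝ)) := by
    have h := (cPhi_hasFPowerSeriesOnBall k).differentiableOn
    rwa [Metric.emetric_ball_nnreal] at h
  have hmaps : Set.MapsTo (fun ζ : ℂ => 1 - Complex.exp (-(((lA : ℂ) + lB) * ζ)))
      (Metric.closedBall (0 : ℂ) R) (Metric.ball (0 : ℂ) ((1 / 3 : ℝ≥0) : ℝ)) := by
    intro ζ hζ
    rw [Metric.mem_closedBall, dist_zero_right] at hζ
    rw [Metric.mem_ball, dist_zero_right]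
    refine lt_of_le_of_lt (hz6 ζ hζ) ?_
    norm_num
  have hdenne : ∀ ζ ∈ Metric.closedBall (0 : ℂ) R,
      Complex.exp (-((lA : ℂ) * ζ)) + Complex.exp ((lB : ℂ) * ζ) ≠ 0 := by
    intro ζ hζ h0
    rw [Metric.mem_closedBall, dist_zero_right] at hζ
    have := hden ζ hζ
    rw [h0, norm_zero] at this
    linarith
  have hFdiff : DifferentiableOn ℂ (cF lA lB lC x k) (Metric.closedBall (0 : ℂ) R) := by
    show DifferentiableOn ℂ (fun ζ : ℂ =>
      2 * cPhi k (1 - Complex.exp (-(((lA : ℂ) + lB) * ζ))) /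
        (Complex.exp (-((lA : ℂ) * ζ)) + Complex.exp ((lB : ℂ) * ζ)) *
        Complex.exp ((lC : ℂ) * x * ζ)) _
    apply DifferentiableOn.mul
    · apply DifferentiableOn.div
      · exact (hPhiDiff.comp hgdiff.differentiableOn hmaps).const_mul 2
      · apply DifferentiableOn.add
        · exact (Complex.differentiable_exp.comp
            (differentiable_id.const_mul _).neg).differentiableOn
        · exact (Complex.differentiable_exp.comp
            (differentiable_id.const_mul _)).differentiableOn
      · exact hdenne
    · exact (Complex.differentiable_exp.comp (differentiable_id.const_mul _)).differentiableOn
  set Rnn : ℝ≥0 := ⟨R, hRpos.le⟩ with hRnn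
  have hcoe : ((Rnn : ℝ≥0) : ℝ) = R := rfl
  have hball : HasFPowerSeriesOnBall (cF lA lB lC x k)
      (cauchyPowerSeries (cF lA lB lC x k) 0 Rnn) 0 Rnn :=
    DifferentiableOn.hasFPowerSeriesOnBall (by rw [hcoe]; exact hFdiff)
      (by exact_mod_cast hRpos)
  set P : FormalMultilinearSeries ℂ ℂ ℂ := cauchyPowerSeries (cF lA lB lC x k) 0 Rnn with hPdef
  have hFbound : ∀ θ : ℝ, ‖cF lA lB lC x k (circleMap 0 R θ)‖ ≤ 6 * k.factorial := by
    intro θ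
    have hmem : ‖circleMap 0 R θ‖ ≤ R := by
      rw [norm_circleMap_zero, abs_of_pos hRpos]
    have h1 := hz6 _ hmem
    have h2 := hden _ hmem
    have h3 := hexpC _ hmem
    have hphi : ‖cPhi k (1 - Complex.exp (-(((lA : ℂ) + lB) * circleMap 0 R θ)))‖ ≤
        (k.factorial : ℝ) := cPhi_norm_le k h1
    show ‖2 * cPhi k _ / _ * _‖ ≤ _
    rw [norm_mul, norm_div, norm_mul]
    have hn2 : ‖(2 : ℂ)‖ = 2 := by norm_num
    rw [hn2]
    have hd1 : 2 * ‖cPhi k (1 - Complex.exp (-(((lA : ℂ) + lB) * circleMap 0 R θ)))‖ /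
        ‖Complex.exp (-((lA : ℂ) * circleMap 0 R θ)) + Complex.exp ((lB : ℂ) * circleMap 0 R θ)‖
        ≤ 2 * (k.factorial : ℝ) := by
      apply le_trans (div_le_self (by positivity) h2)
      linarith
    calc 2 * ‖cPhi k _‖ / ‖_‖ * ‖Complex.exp ((lC : ℂ) * x * circleMap 0 R θ)‖
        ≤ (2 * (k.factorial : ℝ)) * 3 := by
          apply mul_le_mul hd1 h3 (norm_nonneg _) (by positivity)
      _ = 6 * k.factorial := by ring
  have hPbound : ∀ n : ℕ, ‖P n‖ ≤ 6 * (k.factorial : ℝ) * (R⁻¹) ^ n := by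
    intro n
    have h := norm_cauchyPowerSeries_le (cF lA lB lC x k) 0 R n
    have hIb : (∫ θ : ℝ in (0)..(2 * Real.pi), ‖cF lA lB lC x k (circleMap 0 R θ)‖)
        ≤ 6 * (k.factorial : ℝ) * (2 * Real.pi) := by
      have hb := intervalIntegral.norm_integral_le_of_norm_le_const
        (C := 6 * (k.factorial : ℝ)) (f := fun θ : ℝ => ‖cF lA lB lC x k (circleMap 0 R θ)‖)
        (a := 0) (b := 2 * Real.pi)
        (fun θ _ => by
          rw [Real.norm_eq_abs, abs_of_nonneg (norm_nonneg _)]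
          exact hFbound θ)
      calc (∫ θ : ℝ in (0)..(2 * Real.pi), ‖cF lA lB lC x k (circleMap 0 R θ)‖)
          ≤ ‖∫ θ : ℝ in (0)..(2 * Real.pi), ‖cF lA lB lC x k (circleMap 0 R θ)‖‖ :=
            le_abs_self _
        _ ≤ 6 * (k.factorial : ℝ) * |2 * Real.pi - 0| := hb
        _ = 6 * (k.factorial : ℝ) * (2 * Real.pi) := by
            rw [sub_zero, abs_of_pos Real.two_pi_pos]
    have hI : (2 * Real.pi)⁻¹ *
        (∫ θ : ℝ in (0)..(2 * Real.pi), ‖cF lA lB lC x k (circleMap 0 R θ)‖)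
        ≤ 6 * (k.factorial : ℝ) := by
      calc (2 * Real.pi)⁻¹ * _ ≤ (2 * Real.pi)⁻¹ * (6 * (k.factorial : ℝ) * (2 * Real.pi)) :=
            mul_le_mul_of_nonneg_left hIb (by positivity)
        _ = 6 * (k.factorial : ℝ) := by
            field_simp
    calc ‖P n‖ ≤ ((2 * Real.pi)⁻¹ *
          ∫ θ : ℝ in (0)..(2 * Real.pi), ‖cF lA lB lC x k (circleMap 0 R θ)‖) * |R|⁻¹ ^ n := h
      _ ≤ 6 * (k.factorial : ℝ) * |R|⁻¹ ^ n := by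
          apply mul_le_mul_of_nonneg_right hI (by positivity)
      _ = 6 * (k.factorial : ℝ) * (R⁻¹) ^ n := by rw [abs_of_pos hRpos]
  set ecoef : ℕ → ℂ := fun n => P n (fun _ => 1) with hecoefdef
  have hecoef : ∀ n : ℕ, ‖ecoef n‖ ≤ 6 * (k.factorial : ℝ) * (R⁻¹) ^ n := by
    intro n
    calc ‖P n (fun _ => 1)‖ ≤ ‖P n‖ * ∏ _i : Fin n, ‖(1 : ℂ)‖ :=
          ContinuousMultilinearMap.le_opNorm _ _
      _ = ‖P n‖ := by simp
      _ ≤ _ := hPbound n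
  have happly : ∀ (n : ℕ) (t : ℝ), P n (fun _ => (t : ℂ)) = (t : ℂ) ^ n * ecoef n := by
    intro n t
    have hsm : (fun _ : Fin n => (t : ℂ)) = fun i => (t : ℂ) • (fun _ : Fin n => (1 : ℂ)) i := by
      funext i; simp
    rw [hsm, ContinuousMultilinearMap.map_smul_univ]
    simp [hecoefdef, Finset.prod_const, smul_eq_mul]
  have hFreal : ∀ t : ℝ, |t| ≤ R →
      cF lA lB lC x k (t : ℂ) = ((Gfun lA lB lC x k t : ℝ) : ℂ) := by
    intro t ht
    have hnt : ‖(t : ℂ)‖ ≤ R := by rwa [Complex.norm_real, Real.norm_eq_abs]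
    have harg : (1 : ℂ) - Complex.exp (-(((lA : ℂ) + lB) * t)) =
        ((1 - Real.exp (-((lA + lB) * t)) : ℝ) : ℂ) := by
      push_cast [Complex.ofReal_exp]
      ring_nf
    have h6 : |1 - Real.exp (-((lA + lB) * t))| ≤ 1 / 6 := by
      have h := hz6 (t : ℂ) hnt
      rw [harg, Complex.norm_real, Real.norm_eq_abs] at h
      exact h
    show 2 * cPhi k _ / _ * _ = _
    rw [harg, cPhi_ofReal k h6, Gfun]
    push_cast [Complex.ofReal_exp]
    ring_nf
  have h2 : HasFPowerSeriesOnBall (fun t : ℝ => Gfun lA lB lC x k t)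
      (FormalMultilinearSeries.ofScalars ℝ (fun n => (ecoef n).re)) 0 Rnn := by
    constructor
    · apply FormalMultilinearSeries.le_radius_of_bound _ (6 * (k.factorial : ℝ))
      intro n
      rw [FormalMultilinearSeries.ofScalars_norm, hcoe]
      have hre : ‖(ecoef n).re‖ ≤ 6 * (k.factorial : ℝ) * (R⁻¹) ^ n := by
        rw [Real.norm_eq_abs]
        exact le_trans (Complex.abs_re_le_norm _) (hecoef n)
      calc ‖(ecoef n).re‖ * R ^ n ≤ 6 * (k.factorial : ℝ) * (R⁻¹) ^ n * R ^ n :=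
            mul_le_mul_of_nonneg_right hre (by positivity)
        _ = 6 * (k.factorial : ℝ) := by
            rw [mul_assoc, ← mul_pow, inv_mul_cancel₀ hRpos.ne', one_pow, mul_one]
    · exact_mod_cast hRpos
    · intro y hy
      rw [mem_emetric_ball_zero_iff] at hy
      have hy' : |y| < R := by
        have : (‖y‖₊ : ℝ) < ((Rnn : ℝ≥0) : ℝ) := by exact_mod_cast hy
        rwa [coe_nnnorm, Real.norm_eq_abs, hcoe] at this
      have hmem : (↑y : ℂ) ∈ Metric.eball (0 : ℂ) Rnn := by
        rw [mem_emetric_ball_zero_iff]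
        have : (‖(y : ℂ)‖₊ : ℝ) < ((Rnn : ℝ≥0) : ℝ) := by
          rw [coe_nnnorm, Complex.norm_real, Real.norm_eq_abs, hcoe]
          exact hy'
        exact_mod_cast this
      have hc := hball.hasSum hmem
      rw [zero_add] at hc
      have hc2 : HasSum (fun n => (y : ℂ) ^ n * ecoef n) ((Gfun lA lB lC x k y : ℝ) : ℂ) := by
        rw [← hFreal y hy'.le]
        convert hc using 2 with n
        · rfl
        exact (happly n y).symm
      have hc3 := Complex.reCLM.hasSum hc2
      simp only [Complex.reCLM_apply, Complex.ofReal_re] at hc3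
      have hterm : ∀ n : ℕ, ((y : ℂ) ^ n * ecoef n).re = (ecoef n).re * y ^ n := by
        intro n
        rw [← Complex.ofReal_pow, Complex.re_ofReal_mul]
        ring
      simp only [hterm] at hc3
      simp only [FormalMultilinearSeries.ofScalars_apply_eq, smul_eq_mul, zero_add]
      exact hc3
  have hhalf : |ε / 2| < ε := by rw [abs_of_pos (by linarith)]; linarith
  obtain ⟨C, hC⟩ : ∃ C : ℝ, ∀ n : ℕ, |E k n * (ε / 2) ^ n / (n.factorial : ℝ)| ≤ C := by
    have hs := (hE k (ε / 2) hhalf).summable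
    have h0 := hs.tendsto_atTop_zero
    have hb := (h0.abs).bddAbove_range
    obtain ⟨C, hC⟩ := hb
    exact ⟨C, fun n => hC (Set.mem_range_self n)⟩
  have h1 : HasFPowerSeriesOnBall (fun t : ℝ => Gfun lA lB lC x k t)
      (FormalMultilinearSeries.ofScalars ℝ (fun n => E k n / (n.factorial : ℝ))) 0
      (Real.toNNReal (ε / 2)) := by
    constructor
    · apply FormalMultilinearSeries.le_radius_of_bound _ C
      intro n
      rw [FormalMultilinearSeries.ofScalars_norm]
      have hco2 : ((Real.toNNReal (ε / 2) : ℝ≥0) : ℝ) = ε / 2 :=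
        Real.coe_toNNReal _ (by linarith)
      rw [hco2]
      have : ‖E k n / (n.factorial : ℝ)‖ * (ε / 2) ^ n
          = |E k n * (ε / 2) ^ n / (n.factorial : ℝ)| := by
        rw [Real.norm_eq_abs, abs_div, abs_div, abs_mul, abs_pow,
          abs_of_pos (by linarith : (0:ℝ) < ε / 2)]
        rw [div_mul_eq_mul_div]
      rw [this]
      exact hC n
    · exact_mod_cast Real.toNNReal_pos.2 (by linarith)
    · intro y hy
      rw [mem_emetric_ball_zero_iff] at hy
      have hy' : |y| < ε / 2 := by
        have h' : (‖y‖₊ : ℝ) < ((Real.toNNReal (ε / 2) : ℝ≥0) : ℝ) := by exact_mod_cast hy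
        rwa [coe_nnnorm, Real.norm_eq_abs, Real.coe_toNNReal _ (by linarith)] at h'
      have hsum := hE k y (by linarith [hy'] : |y| < ε)
      simp only [FormalMultilinearSeries.ofScalars_apply_eq, smul_eq_mul, zero_add]
      convert hsum using 2 with n
      · rfl
      ring
  have huniq := h1.hasFPowerSeriesAt.eq_formalMultilinearSeries h2.hasFPowerSeriesAt
  have hco3 := FormalMultilinearSeries.ofScalars_series_injective ℝ ℝ huniq
  intro n
  have hcn : E k n / (n.factorial : ℝ) = (ecoef n).re := congrFun hco3 n
  have hfacpos : (0 : ℝ) < (n.factorial : ℝ) := by exact_mod_cast n.factorial_pos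
  have : |E k n| = (n.factorial : ℝ) * |(ecoef n).re| := by
    rw [← hcn, abs_div, abs_of_pos hfacpos]
    field_simp
  rw [this]
  have hre : |(ecoef n).re| ≤ 6 * (k.factorial : ℝ) * (R⁻¹) ^ n :=
    le_trans (Complex.abs_re_le_norm _) (hecoef n)
  calc (n.factorial : ℝ) * |(ecoef n).re|
      ≤ (n.factorial : ℝ) * (6 * (k.factorial : ℝ) * (R⁻¹) ^ n) :=
        mul_le_mul_of_nonneg_left hre (by positivity)
    _ = 6 * (k.factorial : ℝ) * (n.factorial : ℝ) / R ^ n := by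
        rw [inv_pow]
        field_simp
lemma hasSum_exp_real (v : ℝ) :
    HasSum (fun n : ℕ => v ^ n / (n.factorial : ℝ)) (Real.exp v) := by
  rw [Real.exp_eq_exp_ℝ]
  exact NormedSpace.expSeries_div_hasSum_exp v

lemma one_sub_exp_abs (v : ℝ) : |1 - Real.exp v| ≤ Real.exp |v| - 1 := by
  rcases le_or_gt 0 v with h | h
  · rw [abs_of_nonneg h, abs_sub_comm,
      abs_of_nonneg (by linarith [Real.one_le_exp h] : (0:ℝ) ≤ Real.exp v - 1)]
  · rw [abs_of_neg h, abs_of_nonneg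
      (by linarith [Real.exp_lt_one_iff.2 h] : (0:ℝ) ≤ 1 - Real.exp v)]
    have h1 := Real.add_one_le_exp v
    have h2 := Real.add_one_le_exp (-v)
    linarith

lemma exp_eighth_lt : Real.exp (1/8 : ℝ) < 1.14 := by
  have h : (Real.exp (1/8 : ℝ)) ^ (8 : ℕ) = Real.exp 1 := by
    rw [← Real.exp_nat_mul]; norm_num
  have h2 : (Real.exp (1/8 : ℝ)) ^ (8 : ℕ) < (1.14 : ℝ) ^ (8 : ℕ) := by
    rw [h]
    calc Real.exp 1 < 2.7182818286 := Real.exp_one_lt_d9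
      _ < (1.14 : ℝ) ^ (8 : ℕ) := by norm_num
  exact lt_of_pow_lt_pow_left₀ 8 (by norm_num) h2

lemma numeric_kappa :
    Real.exp 1 * ((Real.exp (1/8 : ℝ) - 1) * Real.exp (1/8 : ℝ)) < 1/2 := by
  have h1 := exp_eighth_lt
  have h2 : (1:ℝ) ≤ Real.exp (1/8 : ℝ) := Real.one_le_exp (by norm_num)
  have h3 := Real.exp_one_lt_d9
  have h0 : (0:ℝ) < Real.exp 1 := Real.exp_pos 1
  have e8 := Real.exp (1/8 : ℝ)
  set w := Real.exp (1/8 : ℝ) with hw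
  have hw1 : (w - 1) * w < 0.14 * 1.14 := by nlinarith
  have hw0 : 0 ≤ (w - 1) * w := by nlinarith
  calc Real.exp 1 * ((w - 1) * w) ≤ 2.7182818286 * ((w - 1) * w) := by nlinarith
    _ < 2.7182818286 * (0.14 * 1.14) := by nlinarith
    _ < 1/2 := by norm_num

lemma row_eq (Lr t u Y e : ℝ) (hL : Lr ≠ 0) (n m k : ℕ) (hk : k ≤ m) :
    1 / Lr ^ n * ((m.choose k : ℝ) * e * Y ^ (m - k)) * t ^ n / (n.factorial : ℝ) * u ^ m /
        (m.factorial : ℝ)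
      = e * (t / Lr) ^ n / (n.factorial : ℝ) * (u ^ k / (k.factorial : ℝ)) *
        ((Y * u) ^ (m - k) / ((m - k).factorial : ℝ)) := by
  have hum : u ^ m = u ^ k * u ^ (m - k) := by rw [← pow_add, Nat.add_sub_cancel' hk]
  rw [Nat.cast_choose ℝ hk, hum, div_pow, mul_pow]
  have h1 : (n.factorial : ℝ) ≠ 0 := Nat.cast_ne_zero.2 n.factorial_ne_zero
  have h2 : (k.factorial : ℝ) ≠ 0 := Nat.cast_ne_zero.2 k.factorial_ne_zero
  have h3 : ((m - k).factorial : ℝ) ≠ 0 := Nat.cast_ne_zero.2 (m - k).factorial_ne_zero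
  have h4 : (m.factorial : ℝ) ≠ 0 := Nat.cast_ne_zero.2 m.factorial_ne_zero
  have h5 : Lr ^ n ≠ 0 := pow_ne_zero _ hL
  field_simp
/-- Theorem 4: double exponential generating function of the symmetrized
poly-Euler polynomials `D_n^{(m)}(x,y;a,b,c)`. -/
theorem symmetrized_polyEuler_double_gen_fun
    (a b c : ℝ) (ha : 0 < a) (hb : 0 < b) (hab : a * b ≠ 1) (hc : 0 < c)
    (E : ℕ → ℕ → ℝ → ℝ) (ε : ℝ) (hε : 0 < ε)
    (hE : ∀ k : ℕ, ∀ x t : ℝ, |t| < ε →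
      HasSum (fun n : ℕ => E k n x * t ^ n / (n.factorial : ℝ))
        (2 * polyLogNeg k (1 - (a * b) ^ (-t)) / (a ^ (-t) + b ^ t) * c ^ (x * t)))
    (x y : ℝ)
    -- the symmetrized polynomials
    (D : ℕ → ℕ → ℝ)
    (hD : ∀ n m : ℕ, D n m = (1 / (Real.log a + Real.log b) ^ n) *
      ∑ k ∈ Finset.range (m + 1), (m.choose k : ℝ) * E k n x *
        ((y * Real.log c + Real.log a) / (Real.log a + Real.log b)) ^ (m - k)) :
    ∃ δ > 0, ∀ t u : ℝ, |t| < δ → |u| < δ →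
      HasSum (fun p : ℕ × ℕ =>
          D p.1 p.2 * t ^ p.1 / (p.1.factorial : ℝ) * u ^ p.2 / (p.2.factorial : ℝ))
        (2 * Real.exp ((y * Real.log c + Real.log a) / (Real.log a + Real.log b) * u) *
           Real.exp ((x * Real.log c + Real.log a) / (Real.log a + Real.log b) * t) *
           Real.exp (t + u) * (1 - Real.exp (-t)) /
          ((Real.exp t + 1) * (Real.exp t + Real.exp u - Real.exp (t + u)))) := by
  classical
  set lA : ℝ := Real.log a with hlA
  set lB : ℝ := Real.log b with hlB
  set lC : ℝ := Real.log c with hlC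
  set L : ℝ := lA + lB with hLdef
  have hLlog : L = Real.log (a * b) := (Real.log_mul ha.ne' hb.ne').symm
  have hL : L ≠ 0 := by
    rw [hLlog]
    exact Real.log_ne_zero_of_pos_of_ne_one (mul_pos ha hb) hab
  have hLpos : 0 < |L| := abs_pos.2 hL
  -- rewrite the generating function hypothesis in exponential form
  have hE' : ∀ k : ℕ, ∀ t : ℝ, |t| < ε →
      HasSum (fun n : ℕ => E k n x * t ^ n / (n.factorial : ℝ)) (Gfun lA lB lC x k t) := by
    intro k t ht
    have h := hE k x t ht
    have e1 : (a * b) ^ (-t) = Real.exp (-(L * t)) := by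
      rw [Real.rpow_def_of_pos (mul_pos ha hb), ← hLlog]
      ring_nf
    have e2 : a ^ (-t) = Real.exp (-(lA * t)) := by
      rw [Real.rpow_def_of_pos ha, hlA]
      ring_nf
    have e3 : b ^ t = Real.exp (lB * t) := by rw [Real.rpow_def_of_pos hb]
    have e4 : c ^ (x * t) = Real.exp (lC * x * t) := by
      rw [Real.rpow_def_of_pos hc, hlC]
      ring_nf
    rw [e1, e2, e3, e4] at h
    exact h
  obtain ⟨R, hRpos, hbound⟩ := coeff_bound lA lB lC x (fun k n => E k n x) ε hε hE'
  refine ⟨min (min (|L| * (ε / 2)) (|L| * (R / 2))) (1 / 8),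
    lt_min (lt_min (by positivity) (by positivity)) (by norm_num), fun t u ht hu => ?_⟩
  have ht8 : |t| ≤ 1 / 8 := le_of_lt (lt_of_lt_of_le ht (min_le_right _ _))
  have hu8 : |u| ≤ 1 / 8 := le_of_lt (lt_of_lt_of_le hu (min_le_right _ _))
  have hu12 : |u| ≤ 1 / 2 := by linarith
  set s : ℝ := t / L with hsdef
  have hst : L * s = t := by rw [hsdef]; field_simp
  have hsabs : |s| = |t| / |L| := by rw [hsdef, abs_div]
  have hsε : |s| < ε := by
    have h1 : |t| < |L| * (ε / 2) :=
      lt_of_lt_of_le ht (le_trans (min_le_left _ _) (min_le_left _ _))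
    rw [hsabs, div_lt_iff₀ hLpos]
    nlinarith
  have hsR : |s| ≤ R / 2 := by
    have h1 : |t| < |L| * (R / 2) :=
      lt_of_lt_of_le ht (le_trans (min_le_left _ _) (min_le_right _ _))
    rw [hsabs, div_le_iff₀ hLpos]
    nlinarith
  have hsR2 : |s| / R ≤ 1 / 2 := by
    rw [div_le_div_iff₀ hRpos (by norm_num)]
    linarith
  set z : ℝ := 1 - Real.exp (-t) with hzdef
  have hz14 : |z| ≤ Real.exp (1 / 8) - 1 := by
    have h := one_sub_exp_abs (-t)
    have h2 : Real.exp |(-t)| ≤ Real.exp (1 / 8) := Real.exp_le_exp.2 (by rwa [abs_neg])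
    calc |z| ≤ Real.exp |(-t)| - 1 := h
      _ ≤ Real.exp (1 / 8) - 1 := by linarith
  have hexpu : Real.exp |u| ≤ Real.exp (1 / 8) := Real.exp_le_exp.2 hu8
  have he18 : (1 : ℝ) ≤ Real.exp (1 / 8) := Real.one_le_exp (by norm_num)
  have he1 : (1 : ℝ) ≤ Real.exp 1 := Real.one_le_exp (by norm_num)
  have hkey : Real.exp 1 * (|z| * Real.exp |u|) < 1 / 2 := by
    have h1 : |z| * Real.exp |u| ≤ (Real.exp (1 / 8) - 1) * Real.exp (1 / 8) :=
      mul_le_mul hz14 hexpu (Real.exp_pos _).le (by linarith)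
    have := numeric_kappa
    nlinarith [Real.exp_pos 1]
  have hez : Real.exp 1 * |z| ≤ 1 / 2 := by
    nlinarith [Real.one_le_exp (abs_nonneg u), abs_nonneg z, Real.exp_pos 1]
  have hzeu : |z| * Real.exp |u| ≤ 1 / 2 := by
    nlinarith [abs_nonneg z, Real.exp_pos |u|]
  have hz16 : |z| ≤ 1 / 6 := by nlinarith [exp_eighth_lt]
  -- the double family A over (k, n)
  set A : ℕ × ℕ → ℝ := fun p =>
    E p.1 p.2 x * s ^ p.2 / (p.2.factorial : ℝ) * (u ^ p.1 / (p.1.factorial : ℝ)) with hAdef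
  have hAabs : ∀ p : ℕ × ℕ, |A p| ≤ 6 * ((1 / 2 : ℝ) ^ p.1 * (1 / 2 : ℝ) ^ p.2) := by
    rintro ⟨k, n⟩
    have hfn : (0 : ℝ) < (n.factorial : ℝ) := by exact_mod_cast n.factorial_pos
    have hfk : (0 : ℝ) < (k.factorial : ℝ) := by exact_mod_cast k.factorial_pos
    have habs : |A (k, n)| = |E k n x| * |s| ^ n / (n.factorial : ℝ) *
        (|u| ^ k / (k.factorial : ℝ)) := by
      simp [hAdef, abs_mul, abs_div, abs_pow, abs_of_pos hfn, abs_of_pos hfk]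
    rw [habs]
    have step1 : |E k n x| * |s| ^ n / (n.factorial : ℝ) * (|u| ^ k / (k.factorial : ℝ))
        ≤ (6 * (k.factorial : ℝ) * (n.factorial : ℝ) / R ^ n) * |s| ^ n / (n.factorial : ℝ) *
          (|u| ^ k / (k.factorial : ℝ)) := by
      gcongr
      exact hbound k n
    have step2 : (6 * (k.factorial : ℝ) * (n.factorial : ℝ) / R ^ n) * |s| ^ n /
        (n.factorial : ℝ) * (|u| ^ k / (k.factorial : ℝ))
        = 6 * ((|s| / R) ^ n * |u| ^ k) := by
      rw [div_pow]
      field_simp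
    have step3 : 6 * ((|s| / R) ^ n * |u| ^ k) ≤ 6 * ((1 / 2 : ℝ) ^ k * (1 / 2 : ℝ) ^ n) := by
      have t1 : (|s| / R) ^ n ≤ (1 / 2 : ℝ) ^ n := pow_le_pow_left₀ (by positivity) hsR2 n
      have t2 : |u| ^ k ≤ (1 / 2 : ℝ) ^ k := pow_le_pow_left₀ (abs_nonneg u) hu12 k
      have := mul_le_mul t1 t2 (by positivity) (by positivity)
      nlinarith [pow_nonneg (abs_nonneg u) k, pow_nonneg (by positivity : (0:ℝ) ≤ |s|/R) n]
    calc _ ≤ _ := step1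
      _ = _ := step2
      _ ≤ _ := step3
  have hAabsSummable : Summable (fun p : ℕ × ℕ => |A p|) := by
    apply Summable.of_nonneg_of_le (fun p => abs_nonneg _) hAabs
    apply Summable.mul_left
    exact (summable_geometric_of_lt_one (by norm_num) (by norm_num)).mul_of_nonneg
      (summable_geometric_of_lt_one (by norm_num) (by norm_num))
      (fun k => by positivity) (fun n => by positivity)
  have hA : Summable A := summable_abs_iff.1 hAabsSummable
  -- rows of A sum to Gfun values
  have hArow : ∀ k : ℕ, HasSum (fun n => A (k, n))
      (Gfun lA lB lC x k s * (u ^ k / (k.factorial : ℝ))) :=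
    fun k => (hE' k s hsε).mul_right _
  -- rewrite Gfun at s
  set den : ℝ := Real.exp (-(lA * s)) + Real.exp (lB * s) with hdendef
  set efs : ℝ := Real.exp (lC * x * s) with hefsdef
  set Cs : ℝ := 2 / den * efs with hCsdef
  have hzz : (1 : ℝ) - Real.exp (-((lA + lB) * s)) = z := by
    rw [hzdef, show (lA + lB) * s = t from hst]
  have hGf : ∀ k : ℕ, Gfun lA lB lC x k s = polyLogNeg k z * Cs := by
    intro k
    rw [Gfun, hzz, hCsdef, hdendef, hefsdef]
    ring
  -- the double family B2 over (k, m)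
  set B2 : ℕ × ℕ → ℝ := fun q =>
    u ^ q.1 / (q.1.factorial : ℝ) * (((q.2 : ℝ) + 1) ^ q.1 * z ^ (q.2 + 1)) with hB2def
  have hB2abs : ∀ q : ℕ × ℕ, |B2 q| ≤ (1 / 2 : ℝ) ^ q.1 * (1 / 2 : ℝ) ^ (q.2 + 1) := by
    rintro ⟨k, m⟩
    have hfk : (0 : ℝ) < (k.factorial : ℝ) := by exact_mod_cast k.factorial_pos
    have habs : |B2 (k, m)| = |u| ^ k / (k.factorial : ℝ) *
        (((m : ℝ) + 1) ^ k * |z| ^ (m + 1)) := by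
      simp [hB2def, abs_mul, abs_div, abs_pow, abs_of_pos hfk,
        abs_of_nonneg (by positivity : (0:ℝ) ≤ (m : ℝ) + 1)]
    rw [habs]
    calc |u| ^ k / (k.factorial : ℝ) * (((m : ℝ) + 1) ^ k * |z| ^ (m + 1))
        ≤ |u| ^ k / (k.factorial : ℝ) *
            (((k.factorial : ℝ) * Real.exp 1 ^ (m + 1)) * |z| ^ (m + 1)) := by
          apply mul_le_mul_of_nonneg_left _ (by positivity)
          exact mul_le_mul_of_nonneg_right (aux_pow_le k m) (by positivity)
      _ = |u| ^ k * (Real.exp 1 * |z|) ^ (m + 1) := by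
          rw [mul_pow]
          field_simp
      _ ≤ (1 / 2 : ℝ) ^ k * (1 / 2 : ℝ) ^ (m + 1) := by
          apply mul_le_mul (pow_le_pow_left₀ (abs_nonneg u) hu12 k)
            (pow_le_pow_left₀ (by positivity) hez _) (by positivity) (by positivity)
  have hB2absSummable : Summable (fun q : ℕ × ℕ => |B2 q|) := by
    apply Summable.of_nonneg_of_le (fun q => abs_nonneg _) hB2abs
    exact (summable_geometric_of_lt_one (by norm_num) (by norm_num)).mul_of_nonneg
      (summable_half_pow) (fun k => by positivity) (fun n => by positivity)
  have hB2 : Summable B2 := summable_abs_iff.1 hB2absSummable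
  have hPol : ∀ k : ℕ, HasSum (fun m : ℕ => ((m : ℝ) + 1) ^ k * z ^ (m + 1)) (polyLogNeg k z) :=
    fun k => (summable_polyLogNeg k hz16).hasSum
  have hB2row : ∀ k : ℕ, HasSum (fun m : ℕ => B2 (k, m))
      ((u ^ k / (k.factorial : ℝ)) * polyLogNeg k z) :=
    fun k => (hPol k).mul_left _
  set ξ : ℝ := z * Real.exp u with hξdef
  have hξabs : |ξ| ≤ 1 / 2 := by
    rw [hξdef, abs_mul, abs_of_pos (Real.exp_pos u)]
    calc |z| * Real.exp u ≤ |z| * Real.exp |u| :=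
          mul_le_mul_of_nonneg_left (Real.exp_le_exp.2 (le_abs_self u)) (abs_nonneg z)
      _ ≤ 1 / 2 := hzeu
  have hB2col : ∀ m : ℕ, HasSum (fun k : ℕ => B2 (k, m))
      (Real.exp (((m : ℝ) + 1) * u) * z ^ (m + 1)) := by
    intro m
    have h := (hasSum_exp_real (((m : ℝ) + 1) * u)).mul_right (z ^ (m + 1))
    convert h using 2 with k
    · rfl
    simp only [hB2def]
    rw [mul_pow]
    ring
  have hgeo : HasSum (fun m : ℕ => Real.exp (((m : ℝ) + 1) * u) * z ^ (m + 1))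
      (ξ * (1 - ξ)⁻¹) := by
    have hlt : ‖ξ‖ < 1 := by
      rw [Real.norm_eq_abs]
      linarith
    have h := (hasSum_geometric_of_norm_lt_one hlt).mul_left ξ
    convert h using 2 with m
    · rfl
    rw [hξdef]
    have hexpmu : Real.exp (((m : ℝ) + 1) * u) = Real.exp u ^ (m + 1) := by
      rw [← Real.exp_nat_mul]
      push_cast
      ring_nf
    rw [hexpmu, mul_pow]
    ring
  -- evaluate the double sum of B2 two ways
  have hswap : ∑' k : ℕ, ((u ^ k / (k.factorial : ℝ)) * polyLogNeg k z) = ξ * (1 - ξ)⁻¹ := by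
    have h2 : ∑' (m) (k), B2 (k, m) = ∑' (k) (m), B2 (k, m) :=
      Summable.tsum_comm' (by exact hB2) (fun k => (hB2row k).summable) (fun m => (hB2col m).summable)
    have h3 : ∑' k, ∑' m, B2 (k, m) = ∑' k, ((u ^ k / (k.factorial : ℝ)) * polyLogNeg k z) :=
      tsum_congr fun k => (hB2row k).tsum_eq
    have h4 : ∑' m, ∑' k, B2 (k, m)
        = ∑' m : ℕ, Real.exp (((m : ℝ) + 1) * u) * z ^ (m + 1) :=
      tsum_congr fun m => (hB2col m).tsum_eq
    rw [← h3, ← h2, h4, hgeo.tsum_eq]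
  -- the total sum of A
  have htsumA : ∑' p : ℕ × ℕ, A p = ξ * (1 - ξ)⁻¹ * Cs := by
    rw [Summable.tsum_prod' hA (fun k => (hArow k).summable)]
    have h1 : ∀ k : ℕ, ∑' n, A (k, n) = (u ^ k / (k.factorial : ℝ)) * polyLogNeg k z * Cs := by
      intro k
      rw [(hArow k).tsum_eq, hGf k]
      ring
    calc ∑' k, ∑' n, A (k, n)
        = ∑' k, ((u ^ k / (k.factorial : ℝ)) * polyLogNeg k z * Cs) := tsum_congr h1
      _ = (∑' k, (u ^ k / (k.factorial : ℝ)) * polyLogNeg k z) * Cs := tsum_mul_right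
      _ = ξ * (1 - ξ)⁻¹ * Cs := by rw [hswap]
  -- the exponential row B
  set Yb : ℝ := (y * lC + lA) / L with hYbdef
  set B : ℕ → ℝ := fun j => (Yb * u) ^ j / (j.factorial : ℝ) with hBdef
  have hBsum : HasSum B (Real.exp (Yb * u)) := hasSum_exp_real _
  have hBabs : Summable fun j => ‖B j‖ := by
    have h := (hasSum_exp_real |Yb * u|).summable
    apply h.congr
    intro j
    rw [hBdef, Real.norm_eq_abs, abs_div, abs_pow, abs_of_pos
      (by exact_mod_cast j.factorial_pos : (0:ℝ) < (j.factorial : ℝ))]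
  -- the goal function
  set f : ℕ × ℕ → ℝ := fun p =>
    D p.1 p.2 * t ^ p.1 / (p.1.factorial : ℝ) * u ^ p.2 / (p.2.factorial : ℝ) with hfdef
  have hfD : ∀ n m : ℕ, f (n, m) = ∑ k ∈ Finset.range (m + 1), A (k, n) * B (m - k) := by
    intro n m
    simp only [hfdef]
    rw [hD n m, Finset.mul_sum, Finset.sum_mul, Finset.sum_div, Finset.sum_mul,
      Finset.sum_div]
    apply Finset.sum_congr rfl
    intro k hk
    have hkm : k ≤ m := Nat.lt_succ_iff.1 (Finset.mem_range.1 hk)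
    have hre := row_eq L t u Yb (E k n x) hL n m k hkm
    calc 1 / L ^ n * ((m.choose k : ℝ) * E k n x * Yb ^ (m - k)) * t ^ n /
          (n.factorial : ℝ) * u ^ m / (m.factorial : ℝ)
        = E k n x * (t / L) ^ n / (n.factorial : ℝ) * (u ^ k / (k.factorial : ℝ)) *
          ((Yb * u) ^ (m - k) / ((m - k).factorial : ℝ)) := hre
      _ = A (k, n) * B (m - k) := by simp only [hAdef, hBdef, hsdef]
  -- row norms of A
  have hrowAbs : ∀ n : ℕ, Summable fun k => ‖A (k, n)‖ := by
    intro n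
    have hinj : Function.Injective (fun k : ℕ => ((k, n) : ℕ × ℕ)) := by
      intro k1 k2 h
      simpa using congrArg Prod.fst h
    exact (hAabsSummable.comp_injective hinj).congr (fun k => by
      rw [Real.norm_eq_abs]; rfl)
  -- per-row Cauchy product facts
  have hrowCauchyNorm : ∀ n : ℕ, Summable fun m =>
      ‖∑ k ∈ Finset.range (m + 1), A (k, n) * B (m - k)‖ :=
    fun n => summable_norm_sum_mul_range_of_summable_norm (hrowAbs n) hBabs
  have hrowCauchy : ∀ n : ℕ,
      (∑' k, A (k, n)) * (∑' j, B j) = ∑' m, ∑ k ∈ Finset.range (m + 1), A (k, n) * B (m - k) :=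
    fun n => tsum_mul_tsum_eq_tsum_sum_range_of_summable_norm (hrowAbs n) hBabs
  have hslice : ∀ n : ℕ, Summable fun m => |f (n, m)| := by
    intro n
    exact (hrowCauchyNorm n).congr (fun m => by rw [Real.norm_eq_abs, ← hfD n m])
  -- summability of f
  have hfabs : Summable fun p : ℕ × ℕ => |f p| := by
    refine (summable_prod_of_nonneg (fun p => abs_nonneg (f p))).2 ⟨hslice, ?_⟩
    -- outer summability by comparison
    refine Summable.of_nonneg_of_le
      (f := fun n => (∑' k, ‖A (k, n)‖) * (∑' j, ‖B j‖))
      (fun n => tsum_nonneg (fun m => abs_nonneg _)) (fun n => ?_) ?_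
    · 
      have hconv : ∀ m : ℕ, |f (n, m)| ≤
          ∑ k ∈ Finset.range (m + 1), ‖A (k, n)‖ * ‖B (m - k)‖ := by
        intro m
        rw [hfD n m]
        calc |∑ k ∈ Finset.range (m + 1), A (k, n) * B (m - k)|
            ≤ ∑ k ∈ Finset.range (m + 1), |A (k, n) * B (m - k)| :=
              Finset.abs_sum_le_sum_abs _ _
          _ = ∑ k ∈ Finset.range (m + 1), ‖A (k, n)‖ * ‖B (m - k)‖ := by
              apply Finset.sum_congr rfl
              intro k _
              rw [abs_mul, Real.norm_eq_abs, Real.norm_eq_abs]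
      have hAn : Summable fun k => ‖(‖A (k, n)‖)‖ :=
        (hrowAbs n).congr (fun k => by rw [norm_norm])
      have hBn : Summable fun j => ‖(‖B j‖)‖ :=
        hBabs.congr (fun j => by rw [norm_norm])
      have hmaj : (∑' k, ‖A (k, n)‖) * (∑' j, ‖B j‖)
          = ∑' m, ∑ k ∈ Finset.range (m + 1), ‖A (k, n)‖ * ‖B (m - k)‖ :=
        tsum_mul_tsum_eq_tsum_sum_range_of_summable_norm hAn hBn
      refine le_trans (Summable.tsum_le_tsum hconv (hslice n) ?_) (le_of_eq hmaj.symm)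
      exact (summable_norm_sum_mul_range_of_summable_norm hAn hBn).congr
        (fun m => by
          rw [Real.norm_eq_abs, abs_of_nonneg]
          positivity)
    · -- the comparison family is summable
      apply Summable.mul_right
      have hswapA : Summable fun p : ℕ × ℕ => |A (p.2, p.1)| :=
        hAabsSummable.prod_symm.congr (fun p => rfl)
      have hmarg := (summable_prod_of_nonneg (f := fun p : ℕ × ℕ => |A (p.2, p.1)|)
        (fun p => abs_nonneg _)).1 hswapA
      exact hmarg.2.congr (fun n => tsum_congr (fun k => (Real.norm_eq_abs _).symm))
  have hfsum : Summable f := summable_abs_iff.1 hfabs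
  -- compute the total sum of f
  have hBtsum : ∑' j, B j = Real.exp (Yb * u) := hBsum.tsum_eq
  have hrowfsum : ∀ n : ℕ, Summable fun m => f (n, m) :=
    fun n => summable_abs_iff.1 (hslice n)
  have htsumf : ∑' p : ℕ × ℕ, f p = ξ * (1 - ξ)⁻¹ * Cs * Real.exp (Yb * u) := by
    rw [Summable.tsum_prod' hfsum hrowfsum]
    have hrowval : ∀ n : ℕ, ∑' m, f (n, m) = (∑' k, A (k, n)) * Real.exp (Yb * u) := by
      intro n
      calc ∑' m, f (n, m) = ∑' m, ∑ k ∈ Finset.range (m + 1), A (k, n) * B (m - k) :=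
            tsum_congr (fun m => hfD n m)
        _ = (∑' k, A (k, n)) * (∑' j, B j) := (hrowCauchy n).symm
        _ = (∑' k, A (k, n)) * Real.exp (Yb * u) := by rw [hBtsum]
    calc ∑' n, ∑' m, f (n, m)
        = ∑' n, ((∑' k, A (k, n)) * Real.exp (Yb * u)) := tsum_congr hrowval
      _ = (∑' n, ∑' k, A (k, n)) * Real.exp (Yb * u) := tsum_mul_right
      _ = (∑' k, ∑' n, A (k, n)) * Real.exp (Yb * u) := by
          rw [Summable.tsum_comm' (by exact hA) (fun k => (hArow k).summable)
            (fun n => summable_abs_iff.1 ((hrowAbs n).congr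
              (fun k => (Real.norm_eq_abs _ : ‖A (k, n)‖ = _))))]
      _ = (∑' p : ℕ × ℕ, A p) * Real.exp (Yb * u) := by
          rw [Summable.tsum_prod' hA (fun k => (hArow k).summable)]
      _ = ξ * (1 - ξ)⁻¹ * Cs * Real.exp (Yb * u) := by rw [htsumA]
  -- final algebra
  have hetpos := Real.exp_pos t
  have heupos := Real.exp_pos u
  have h1ξ : (0 : ℝ) < 1 - ξ := by nlinarith [abs_le.1 hξabs]
  have hXt : (x * lC + lA) / L * t = lC * x * s + lA * s := by
    rw [← hst]
    field_simp
  have hCs : Cs = 2 * Real.exp ((x * lC + lA) / L * t) / (Real.exp t + 1) := by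
    have hf1 : efs * Real.exp (lA * s) = Real.exp ((x * lC + lA) / L * t) := by
      rw [hefsdef, ← Real.exp_add, hXt]
    have hf2 : den * Real.exp (lA * s) = 1 + Real.exp t := by
      rw [hdendef, add_mul, ← Real.exp_add, ← Real.exp_add, neg_add_cancel, Real.exp_zero]
      congr 1
      rw [show lB * s + lA * s = L * s by rw [hLdef]; ring, hst]
    have hdenpos : (0 : ℝ) < den := by rw [hdendef]; positivity
    rw [hCsdef, div_mul_eq_mul_div,
      div_eq_div_iff hdenpos.ne' (by positivity : (0:ℝ) < Real.exp t + 1).ne']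
    rw [← hf1, show Real.exp t + 1 = den * Real.exp (lA * s) by rw [hf2]; ring]
    ring
  have hf5 : Real.exp t + Real.exp u - Real.exp (t + u) = Real.exp t * (1 - ξ) := by
    rw [Real.exp_add, hξdef, hzdef, Real.exp_neg]
    field_simp
    ring
  have hfinal : ξ * (1 - ξ)⁻¹ * Cs * Real.exp (Yb * u)
      = 2 * Real.exp (Yb * u) * Real.exp ((x * lC + lA) / L * t) *
          Real.exp (t + u) * z /
        ((Real.exp t + 1) * (Real.exp t + Real.exp u - Real.exp (t + u))) := by
    rw [hCs, hf5, Real.exp_add, hξdef]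
    field_simp
  have hfin2 := hfsum.hasSum
  rw [htsumf, hfinal] at hfin2
  exact hfin2
end

section
/- For all n ≥ 0, d/dx E_{n+1}^{(k_1,…,k_r)}(x; a, b, c) = (n+1)(r ln c) · E_n^{(k_1,…,k_r)}(x; a, b, c). -/
open Filter FormalMultilinearSeries Finset NNReal ENNReal

/-- The multiple polylogarithm
`Li_{(k_1,…,k_r)}(z) = ∑_{1 ≤ m_1 ≤ … ≤ m_r} z^{m_r}/(m_1^{k_1} ⋯ m_r^{k_r})`. -/
noncomputable def multiPolyLog (r : ℕ) (hr : 0 < r) (k : Fin r → ℤ) (z : ℝ) : ℝ :=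
  ∑' f : {f : Fin r → ℕ // Monotone f ∧ 0 < f ⟨0, hr⟩},
    z ^ (f.1 ⟨r - 1, Nat.sub_lt hr Nat.one_pos⟩) / ∏ i, ((f.1 i : ℝ)) ^ (k i)

private lemma auxFPS (A : ℕ → ℝ) (f : ℝ → ℝ) {ε : ℝ} (hε : 0 < ε)
    (h : ∀ t : ℝ, |t| < ε → HasSum (fun n => A n * t ^ n) (f t)) :
    HasFPowerSeriesAt f (ofScalars ℝ A) 0 := by
  have hhalf : 0 < ε / 2 := by linarith
  refine ⟨ENNReal.ofReal (ε / 2), ?_, ENNReal.ofReal_pos.mpr hhalf, ?_⟩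
  · have hsum : Summable (fun n => A n * (ε / 2) ^ n) :=
      (h (ε / 2) (by rw [abs_of_pos hhalf]; linarith)).summable
    have htend : Tendsto (fun n => |A n * (ε / 2) ^ n|) atTop (nhds 0) := by
      simpa using hsum.tendsto_atTop_zero.abs
    have hcoe : (((ε / 2).toNNReal : ℝ≥0) : ℝ) = ε / 2 := Real.coe_toNNReal _ hhalf.le
    have hofr : ENNReal.ofReal (ε / 2) = (((ε / 2).toNNReal : ℝ≥0) : ℝ≥0∞) := rfl
    rw [hofr]
    apply FormalMultilinearSeries.le_radius_of_tendsto _ (l := 0)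
    have : (fun n => ‖ofScalars ℝ A n‖ * (((ε / 2).toNNReal : ℝ≥0) : ℝ) ^ n)
        = fun n => |A n * (ε / 2) ^ n| := by
      funext n
      rw [ofScalars_norm, hcoe, Real.norm_eq_abs, abs_mul,
        abs_of_nonneg (pow_nonneg hhalf.le n)]
    rw [this]
    exact htend
  · intro y hy
    have hy' : |y| < ε := by
      rw [EMetric.mem_ball, edist_dist, dist_zero_right] at hy
      have := (ENNReal.ofReal_lt_ofReal_iff hhalf).mp hy
      rw [Real.norm_eq_abs] at this
      linarith
    have happ : (fun n => ofScalars ℝ A n fun _ => y) = fun n => A n * y ^ n := by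
      funext n
      rw [ofScalars_apply_eq, smul_eq_mul]
    rw [zero_add, happ]
    exact h y hy'

private lemma coeff_unique {A B : ℕ → ℝ} {f : ℝ → ℝ} {ε : ℝ} (hε : 0 < ε)
    (hA : ∀ t : ℝ, |t| < ε → HasSum (fun n => A n * t ^ n) (f t))
    (hB : ∀ t : ℝ, |t| < ε → HasSum (fun n => B n * t ^ n) (f t)) : A = B :=
  ofScalars_series_injective ℝ ℝ
    ((auxFPS A f hε hA).eq_formalMultilinearSeries (auxFPS B f hε hB))

private lemma abs_summable {A : ℕ → ℝ} {ε : ℝ} (hε : 0 < ε)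
    (h : ∀ s : ℝ, |s| < ε → Summable (fun n => A n * s ^ n)) {t : ℝ} (ht : |t| < ε) :
    Summable fun n => |A n * t ^ n| := by
  set s : ℝ := (|t| + ε) / 2 with hs
  have h0 : 0 ≤ |t| := abs_nonneg t
  have hs1 : |t| < s := by rw [hs]; linarith
  have hs2 : s < ε := by rw [hs]; linarith
  have hspos : 0 < s := lt_of_le_of_lt h0 hs1
  have hsum := h s (by rw [abs_of_pos hspos]; exact hs2)
  obtain ⟨C, hC⟩ := hsum.tendsto_atTop_zero.abs.bddAbove_range
  have hq : |t| / s < 1 := (div_lt_one hspos).mpr hs1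
  have hq0 : 0 ≤ |t| / s := div_nonneg h0 hspos.le
  refine Summable.of_nonneg_of_le (fun n => abs_nonneg _) (fun n => ?_)
    ((summable_geometric_of_lt_one hq0 hq).mul_left C)
  have h1 : |A n * s ^ n| ≤ C := hC (Set.mem_range_self n)
  have hts : s * (|t| / s) = |t| := by field_simp
  have key : |A n * t ^ n| = |A n * s ^ n| * (|t| / s) ^ n := by
    rw [abs_mul, abs_mul, abs_pow, abs_pow, abs_of_pos hspos, mul_assoc, ← mul_pow, hts]
  rw [key]
  exact mul_le_mul_of_nonneg_right h1 (pow_nonneg hq0 n)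

private lemma nat_id (n j : ℕ) (h : j ≤ n) :
    (n + 1 - j) * (n + 1).choose j = (n + 1) * n.choose j := by
  have h2 := Nat.add_one_mul_choose_eq n (n - j)
  rw [Nat.choose_symm h] at h2
  have h3 : n - j + 1 = n + 1 - j := by omega
  rw [h3] at h2
  rw [Nat.choose_symm (Nat.le_succ_of_le h)] at h2
  calc (n + 1 - j) * (n + 1).choose j = (n + 1).choose j * (n + 1 - j) := Nat.mul_comm _ _
    _ = n.succ * n.choose j := h2.symm
    _ = (n + 1) * n.choose j := rfl

private lemma key_poly (G : ℝ → ℝ) (α : ℝ) (E : ℕ → ℝ → ℝ) {ε : ℝ} (hε : 0 < ε)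
    (h : ∀ x t : ℝ, |t| < ε →
      HasSum (fun m : ℕ => E m x / (m.factorial : ℝ) * t ^ m) (G t * Real.exp (α * x * t))) :
    ∀ (x : ℝ) (m : ℕ), E m x =
      ∑ j ∈ Finset.range (m + 1), (m.choose j : ℝ) * E j 0 * (α * x) ^ (m - j) := by
  intro x m
  have h0 : ∀ t : ℝ, |t| < ε →
      HasSum (fun m : ℕ => E m 0 / (m.factorial : ℝ) * t ^ m) (G t) := by
    intro t ht
    simpa using h 0 t ht
  have hP : ∀ t : ℝ, |t| < ε →
      HasSum (fun n : ℕ =>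
        (∑ j ∈ Finset.range (n + 1), (n.choose j : ℝ) * E j 0 * (α * x) ^ (n - j))
          / (n.factorial : ℝ) * t ^ n)
        (G t * Real.exp (α * x * t)) := by
    intro t ht
    have hf : Summable fun k : ℕ => ‖E k 0 / (k.factorial : ℝ) * t ^ k‖ := by
      simp only [Real.norm_eq_abs]
      exact abs_summable hε (fun s hs => (h0 s hs).summable) ht
    have hg : Summable fun n : ℕ => ‖(α * x * t) ^ n / (n.factorial : ℝ)‖ :=
      NormedSpace.norm_expSeries_div_summable (α * x * t)
    have Hf : HasSum (fun k : ℕ => E k 0 / (k.factorial : ℝ) * t ^ k) (G t) := h0 t ht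
    have Hg : HasSum (fun n : ℕ => (α * x * t) ^ n / (n.factorial : ℝ))
        (Real.exp (α * x * t)) := by
      rw [Real.exp_eq_exp_ℝ]
      exact NormedSpace.expSeries_div_hasSum_exp (α * x * t)
    have Hprod := hasSum_sum_range_mul_of_summable_norm hf hg
    rw [Hf.tsum_eq, Hg.tsum_eq] at Hprod
    have eqn : (fun n : ℕ => ∑ k ∈ Finset.range (n + 1),
          E k 0 / (k.factorial : ℝ) * t ^ k * ((α * x * t) ^ (n - k) / ((n - k).factorial : ℝ)))
        = fun n : ℕ =>
          (∑ j ∈ Finset.range (n + 1), (n.choose j : ℝ) * E j 0 * (α * x) ^ (n - j))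
            / (n.factorial : ℝ) * t ^ n := by
      funext n
      rw [Finset.sum_div, Finset.sum_mul]
      refine Finset.sum_congr rfl fun j hj => ?_
      have hjn : j ≤ n := Nat.lt_succ_iff.mp (Finset.mem_range.mp hj)
      have hfact : ((n.choose j : ℝ)) * (j.factorial : ℝ) * ((n - j).factorial : ℝ)
          = (n.factorial : ℝ) := by
        exact_mod_cast congrArg (Nat.cast (R := ℝ))
          (Nat.choose_mul_factorial_mul_factorial hjn)
      have htn : t ^ n = t ^ j * t ^ (n - j) := by
        rw [← pow_add, Nat.add_sub_cancel' hjn]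
      have hj0 : (j.factorial : ℝ) ≠ 0 := Nat.cast_ne_zero.mpr j.factorial_ne_zero
      have hnj0 : ((n - j).factorial : ℝ) ≠ 0 := Nat.cast_ne_zero.mpr (n - j).factorial_ne_zero
      have hn0 : (n.factorial : ℝ) ≠ 0 := Nat.cast_ne_zero.mpr n.factorial_ne_zero
      rw [mul_pow, htn]
      field_simp
      linear_combination (-(E j 0 * (α * x) ^ (n - j) * t ^ j * t ^ (n - j))) * hfact
    rw [eqn] at Hprod
    exact Hprod
  have huniq : (fun m : ℕ => E m x / (m.factorial : ℝ))
      = fun m : ℕ =>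
        (∑ j ∈ Finset.range (m + 1), (m.choose j : ℝ) * E j 0 * (α * x) ^ (m - j))
          / (m.factorial : ℝ) :=
    coeff_unique hε (fun t ht => h x t ht) (fun t ht => hP t ht)
  have hm := congrFun huniq m
  have hmne : (m.factorial : ℝ) ≠ 0 := Nat.cast_ne_zero.mpr m.factorial_ne_zero
  field_simp at hm
  exact hm

/-- `d/dx E_{n+1}^{(k_1,…,k_r)}(x;a,b,c) = (n+1)(r ln c) E_n^{(k_1,…,k_r)}(x;a,b,c)`. -/
theorem multi_polyEuler_deriv
    (r : ℕ) (hr : 0 < r) (k : Fin r → ℤ)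
    (a b c : ℝ) (ha : 0 < a) (hb : 0 < b) (hc : 0 < c)
    (E : ℕ → ℝ → ℝ) (ε : ℝ) (hε : 0 < ε)
    (hE : ∀ x t : ℝ, |t| < ε →
      HasSum (fun n : ℕ => E n x * t ^ n / (n.factorial : ℝ))
        (2 * multiPolyLog r hr k (1 - (a * b) ^ (-t)) / (a ^ (-t) + b ^ t) ^ r *
          c ^ ((r : ℝ) * x * t)))
    (n : ℕ) (x : ℝ) :
    HasDerivAt (fun y : ℝ => E (n + 1) y)
      (((n : ℝ) + 1) * ((r : ℝ) * Real.log c) * E n x) x := by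
  set α : ℝ := (r : ℝ) * Real.log c with hα
  have hkey := key_poly
    (fun t => 2 * multiPolyLog r hr k (1 - (a * b) ^ (-t)) / (a ^ (-t) + b ^ t) ^ r)
    α E hε ?_
  · have hfun : (fun y : ℝ => E (n + 1) y) = fun y : ℝ =>
        ∑ j ∈ Finset.range (n + 2), ((n + 1).choose j : ℝ) * E j 0 * (α * y) ^ (n + 1 - j) := by
      funext y
      exact hkey y (n + 1)
    rw [hfun]
    have hderiv : HasDerivAt
        (fun y : ℝ => ∑ j ∈ Finset.range (n + 2),
          ((n + 1).choose j : ℝ) * E j 0 * (α * y) ^ (n + 1 - j))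
        (∑ j ∈ Finset.range (n + 2),
          ((n + 1).choose j : ℝ) * E j 0 *
            (((n + 1 - j : ℕ) : ℝ) * (α * x) ^ (n + 1 - j - 1) * α)) x := by
      apply HasDerivAt.fun_sum
      intro j _
      have h1 : HasDerivAt (fun y : ℝ => α * y) α x := by
        simpa using (hasDerivAt_id x).const_mul α
      exact (h1.pow (n + 1 - j)).const_mul (((n + 1).choose j : ℝ) * E j 0)
    convert hderiv using 1
    rw [Finset.sum_range_succ]
    have hlast : ((n + 1).choose (n + 1) : ℝ) * E (n + 1) 0 *
        (((n + 1 - (n + 1) : ℕ) : ℝ) * (α * x) ^ (n + 1 - (n + 1) - 1) * α) = 0 := by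
      simp
    rw [hlast, add_zero, hkey x n, Finset.mul_sum]
    refine Finset.sum_congr rfl fun j hj => ?_
    have hjn : j ≤ n := Nat.lt_succ_iff.mp (Finset.mem_range.mp hj)
    have hsub : n + 1 - j - 1 = n - j := by omega
    have hid : (((n + 1 - j : ℕ) : ℝ)) * (((n + 1).choose j : ℕ) : ℝ)
        = ((n : ℝ) + 1) * ((n.choose j : ℕ) : ℝ) := by
      have hcast := congrArg (Nat.cast (R := ℝ)) (nat_id n j hjn)
      push_cast at hcast
      exact_mod_cast hcast
    rw [hsub]
    linear_combination (-(E j 0 * (α * x) ^ (n - j) * α)) * hid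
  · intro x' t ht
    have hthis := hE x' t ht
    have hc' : c ^ ((r : ℝ) * x' * t) = Real.exp (α * x' * t) := by
      rw [Real.rpow_def_of_pos hc, hα]
      congr 1
      ring
    rw [hc'] at hthis
    have e : (fun m : ℕ => E m x' * t ^ m / (m.factorial : ℝ))
        = fun m : ℕ => E m x' / (m.factorial : ℝ) * t ^ m := by
      funext m
      ring
    rw [e] at hthis
    exact hthis
end
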